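/- arXiv:2306.08758 — 4 statements merged into one kernel-verified Lean document; each statement's English description precedes it below -/
import Mathlib

section
/- For every d ≥ 1 and r ∈ [1,∞) there is a constant C (depending only on r and d) such that the following holds: for all smooth ℤ^d-periodic functions f, g : ℝ^d → ℝ and every positive integer λ, one has (∫_{[0,1]^d} |f(x) g(λx)|^r dx)^{1/r} ≤ (∫_{[0,1]^d} |f|^r)^{1/r} (∫_{[0,1]^d} |g|^r)^{1/r} + C λ^{−1/r} ‖f‖_{C¹} (∫_{[0,1]^d}|g|^r)^{1/r}, where ‖f‖_{C¹} := sup_{x∈[0,1]^d} |f(x)| + sup_{x∈[0,1]^d} |∇f(x)|. -/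
open MeasureTheory

noncomputable section

/-- The unit cell `[0,1]^d` of the torus. -/
def unitCube (d : ℕ) : Set (EuclideanSpace ℝ (Fin d)) := {x | ∀ i, x i ∈ Set.Icc (0:ℝ) 1}

/-- `ℤ^d`-periodicity of a function on `ℝ^d`. -/
def ZdPeriodic {d : ℕ} {α : Type*} (f : EuclideanSpace ℝ (Fin d) → α) : Prop :=
  ∀ (x : EuclideanSpace ℝ (Fin d)) (m : Fin d → ℤ),
    f (x + (EuclideanSpace.equiv (Fin d) ℝ).symm fun i => (m i : ℝ)) = f x

namespace IHAux

open Set ENNReal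

variable {d : ℕ}

theorem box_eq (s : Fin d → Set ℝ) : {x : EuclideanSpace ℝ (Fin d) | ∀ i, x i ∈ s i}
    = (MeasurableEquiv.toLp 2 (Fin d → ℝ)).symm ⁻¹' (Set.pi univ s) := by
  ext x; simp [MeasurableEquiv.coe_toLp_symm, Set.mem_pi]

theorem box_measurable (s : Fin d → Set ℝ) (hs : ∀ i, MeasurableSet (s i)) :
    MeasurableSet {x : EuclideanSpace ℝ (Fin d) | ∀ i, x i ∈ s i} := by
  rw [box_eq]
  exact (MeasurableEquiv.toLp 2 (Fin d → ℝ)).symm.measurable (MeasurableSet.univ_pi hs)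

theorem vol_box (s : Fin d → Set ℝ) (hs : ∀ i, MeasurableSet (s i)) :
    volume {x : EuclideanSpace ℝ (Fin d) | ∀ i, x i ∈ s i} = ∏ i, volume (s i) := by
  have h := (EuclideanSpace.volume_preserving_symm_measurableEquiv_toLp (Fin d)).measure_preimage
    (MeasurableSet.univ_pi hs).nullMeasurableSet
  rw [box_eq, h, volume_pi_pi]

theorem hyper_pi (i : Fin d) (c : ℝ) : volume {y : Fin d → ℝ | y i = c} = 0 := by
  rw [volume_pi]; exact Measure.pi_hyperplane (fun _ => (volume : Measure ℝ)) i c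

theorem hyperplane_null (i : Fin d) (c : ℝ) :
    volume {x : EuclideanSpace ℝ (Fin d) | x i = c} = 0 := by
  have h : {x : EuclideanSpace ℝ (Fin d) | x i = c}
      = (MeasurableEquiv.toLp 2 (Fin d → ℝ)).symm ⁻¹' {y : Fin d → ℝ | y i = c} := by
    ext x; simp [MeasurableEquiv.coe_toLp_symm]
  have hm : MeasurableSet {y : Fin d → ℝ | y i = c} :=
    measurableSet_eq_fun (measurable_pi_apply i) measurable_const
  rw [h, (EuclideanSpace.volume_preserving_symm_measurableEquiv_toLp (Fin d)).measure_preimage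
    hm.nullMeasurableSet]
  exact hyper_pi i c

/-- The half-open unit cube. -/
def cube0 (d : ℕ) : Set (EuclideanSpace ℝ (Fin d)) := {x | ∀ i, x i ∈ Set.Ico (0:ℝ) 1}

/-- The small half-open subcube indexed by `k`. -/
def Qset (lam : ℕ) (k : Fin d → Fin lam) : Set (EuclideanSpace ℝ (Fin d)) :=
  {x | ∀ i, x i ∈ Set.Ico ((k i : ℝ)/(lam:ℝ)) (((k i : ℝ)+1)/(lam:ℝ))}

theorem Qset_measurable (lam : ℕ) (k : Fin d → Fin lam) : MeasurableSet (Qset lam k) :=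
  box_measurable _ fun _ => measurableSet_Ico

theorem cube0_measurable : MeasurableSet (cube0 d) := box_measurable _ fun _ => measurableSet_Ico

theorem unitCube_measurable : MeasurableSet (unitCube d) :=
  box_measurable _ fun _ => measurableSet_Icc

theorem vol_Qset (lam : ℕ) (hlam : 0 < lam) (k : Fin d → Fin lam) :
    volume (Qset lam k) = ENNReal.ofReal (((lam:ℝ))⁻¹ ^ d) := by
  rw [Qset, vol_box _ fun _ => measurableSet_Ico]
  have hl : (0:ℝ) < lam := Nat.cast_pos.2 hlam
  have h : ∀ i : Fin d, volume (Set.Ico ((k i : ℝ)/(lam:ℝ)) (((k i : ℝ)+1)/(lam:ℝ)))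
      = ENNReal.ofReal ((lam:ℝ))⁻¹ := by
    intro i; rw [Real.volume_Ico]; congr 1; field_simp; ring
  simp_rw [h]
  rw [Finset.prod_const, ← ENNReal.ofReal_pow (by positivity)]
  simp

theorem vol_cube0 : volume (cube0 d) = 1 := by
  rw [cube0, vol_box _ fun _ => measurableSet_Ico]
  simp [Real.volume_Ico]

theorem Qset_disj (lam : ℕ) : Pairwise (Function.onFun Disjoint (Qset (d := d) lam)) := by
  intro k k' hkk'
  have hex : ∃ i, k i ≠ k' i := by
    by_contra h; push_neg at h; exact hkk' (funext h)
  obtain ⟨i, hi⟩ := hex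
  rw [Function.onFun, Set.disjoint_left]
  intro x hx hx'
  have h1 := hx i; have h2 := hx' i
  have hl : (0:ℝ) < lam := by
    have := (k i).isLt
    exact_mod_cast lt_of_le_of_lt (Nat.zero_le _) this
  have key : ∀ a b : Fin lam, (a:ℕ) < (b:ℕ) → ((a:ℝ)+1)/(lam:ℝ) ≤ ((b:ℝ))/(lam:ℝ) := by
    intro a b hab
    gcongr
    exact_mod_cast Nat.succ_le_of_lt hab
  rcases lt_or_gt_of_ne (fun h => hi (Fin.ext h) : (k i : ℕ) ≠ (k' i : ℕ)) with hlt | hlt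
  · exact absurd (lt_of_lt_of_le h1.2 (key _ _ hlt)) (not_lt.2 h2.1)
  · exact absurd (lt_of_lt_of_le h2.2 (key _ _ hlt)) (not_lt.2 h1.1)

theorem Qset_iUnion (lam : ℕ) (hlam : 0 < lam) :
    (⋃ k : Fin d → Fin lam, Qset lam k) = cube0 d := by
  have hl : (0:ℝ) < lam := Nat.cast_pos.2 hlam
  apply Set.Subset.antisymm
  · rintro x ⟨_, ⟨k, rfl⟩, hx⟩
    intro i
    have h := hx i
    constructor
    · refine le_trans ?_ h.1
      positivity
    · refine lt_of_lt_of_le h.2 ?_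
      rw [div_le_one hl]
      have : ((k i : ℝ) + 1) ≤ lam := by
        have := (k i).isLt
        exact_mod_cast Nat.succ_le_of_lt this
      exact this
  · intro x hx
    have hk : ∀ i, ⌊(lam:ℝ) * x i⌋₊ < lam := by
      intro i
      rw [Nat.floor_lt (by nlinarith [(hx i).1])]
      nlinarith [(hx i).2]
    refine Set.mem_iUnion.2 ⟨fun i => ⟨⌊(lam:ℝ) * x i⌋₊, hk i⟩, fun i => ?_⟩
    constructor
    · rw [div_le_iff₀ hl]
      calc ((⟨⌊(lam:ℝ) * x i⌋₊, hk i⟩ : Fin lam) : ℝ) = (⌊(lam:ℝ) * x i⌋₊ : ℝ) := rfl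
        _ ≤ (lam:ℝ) * x i := Nat.floor_le (by nlinarith [(hx i).1])
        _ = x i * lam := mul_comm _ _
    · rw [lt_div_iff₀ hl]
      calc x i * lam = (lam:ℝ) * x i := mul_comm _ _
        _ < (⌊(lam:ℝ) * x i⌋₊ : ℝ) + 1 := Nat.lt_floor_add_one _
        _ = ((⟨⌊(lam:ℝ) * x i⌋₊, hk i⟩ : Fin lam) : ℝ) + 1 := rfl

theorem cube_ae_eq : (unitCube d : Set _) =ᵐ[volume] cube0 d := by
  rw [MeasureTheory.ae_eq_set]
  constructor
  · refine measure_mono_null (fun x hx => ?_)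
      (measure_iUnion_null fun i : Fin d => hyperplane_null i 1)
    simp only [mem_diff, unitCube, cube0, mem_setOf_eq] at hx
    obtain ⟨h1, h2⟩ := hx
    push_neg at h2
    obtain ⟨i, hi⟩ := h2
    refine Set.mem_iUnion.2 ⟨i, ?_⟩
    have := h1 i
    simp only [mem_setOf_eq]
    rcases this with ⟨ha, hb⟩
    rcases eq_or_lt_of_le hb with h | h
    · exact h
    · exact absurd ⟨ha, h⟩ hi
  · have h : cube0 d \ unitCube d = ∅ := by
      apply Set.diff_eq_empty.2
      intro x hx i
      exact ⟨(hx i).1, le_of_lt (hx i).2⟩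
    rw [h]; simp

theorem cube_compact : IsCompact (unitCube d) := by
  have h : unitCube d = (EuclideanSpace.equiv (Fin d) ℝ).toHomeomorph ⁻¹'
      (Set.pi univ fun _ => Icc (0:ℝ) 1) := by
    ext x
    simp only [unitCube, mem_preimage, Set.mem_pi, mem_univ, forall_true_left, mem_setOf_eq]
    rfl
  rw [h, Homeomorph.isCompact_preimage]
  exact isCompact_univ_pi fun _ => isCompact_Icc

theorem cube_convex : Convex ℝ (unitCube d) := by
  intro x hx y hy a b ha hb hab i
  have hx' := hx i; have hy' := hy i
  have he : (a • x + b • y) i = a * x i + b * y i := rfl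
  constructor
  · rw [he]; exact add_nonneg (mul_nonneg ha hx'.1) (mul_nonneg hb hy'.1)
  · rw [he]
    calc a * x i + b * y i ≤ a * 1 + b * 1 := by
          gcongr; exact hx'.2; exact hy'.2
      _ = 1 := by rw [mul_one, mul_one, hab]

theorem cube_nonempty : (0 : EuclideanSpace ℝ (Fin d)) ∈ unitCube d := by
  intro i
  show (0:ℝ) ∈ Icc (0:ℝ) 1
  exact ⟨le_refl 0, zero_le_one⟩

theorem le_sup_on_cube {φ : EuclideanSpace ℝ (Fin d) → ℝ} (hφ : Continuous φ)
    {x : EuclideanSpace ℝ (Fin d)} (hx : x ∈ unitCube d) :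
    φ x ≤ sSup (φ '' unitCube d) :=
  le_csSup (cube_compact.bddAbove_image hφ.continuousOn) (Set.mem_image_of_mem φ hx)

theorem lip_est {f : EuclideanSpace ℝ (Fin d) → ℝ} (hf : ContDiff ℝ (⊤ : ℕ∞) f)
    {x y : EuclideanSpace ℝ (Fin d)} (hx : x ∈ unitCube d) (hy : y ∈ unitCube d) :
    |f x| ≤ |f y| + sSup ((fun x => ‖fderiv ℝ f x‖) '' unitCube d) * ‖x - y‖ := by
  set L := sSup ((fun x => ‖fderiv ℝ f x‖) '' unitCube d)
  have hbound : ∀ z ∈ unitCube d, ‖fderiv ℝ f z‖ ≤ L :=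
    fun z hz => le_sup_on_cube (hf.continuous_fderiv (by norm_num)).norm hz
  have hkey := Convex.norm_image_sub_le_of_norm_fderiv_le
    (fun z _ => (hf.differentiable (by norm_num)).differentiableAt) hbound cube_convex hy hx
  calc |f x| ≤ |f y| + ‖f x - f y‖ := by
        rw [Real.norm_eq_abs]
        have := abs_sub_abs_le_abs_sub (f x) (f y)
        linarith
    _ ≤ |f y| + L * ‖x - y‖ := by linarith [hkey]

theorem corner_dist (lam : ℕ) (hlam : 0 < lam) (x y : EuclideanSpace ℝ (Fin d))
    (h : ∀ i, |x i - y i| ≤ (lam:ℝ)⁻¹) : ‖x - y‖ ≤ Real.sqrt d / lam := by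
  have hl : (0:ℝ) < lam := Nat.cast_pos.2 hlam
  rw [EuclideanSpace.norm_eq]
  have hs : ∑ i, ‖(x - y) i‖ ^ 2 ≤ (d : ℝ) * ((lam:ℝ)⁻¹) ^ 2 := by
    calc ∑ i, ‖(x - y) i‖ ^ 2 ≤ ∑ _i : Fin d, ((lam:ℝ)⁻¹) ^ 2 := by
          apply Finset.sum_le_sum; intro i _
          have hxy : (x - y) i = x i - y i := rfl
          rw [hxy, Real.norm_eq_abs]
          have := h i
          nlinarith [abs_nonneg (x i - y i)]
      _ = (d : ℝ) * ((lam:ℝ)⁻¹) ^ 2 := by simp [mul_comm]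
  calc Real.sqrt (∑ i, ‖(x - y) i‖ ^ 2) ≤ Real.sqrt ((d:ℝ) * ((lam:ℝ)⁻¹) ^ 2) :=
        Real.sqrt_le_sqrt hs
    _ = Real.sqrt d / lam := by
        rw [Real.sqrt_mul (Nat.cast_nonneg d), Real.sqrt_sq (by positivity)]
        field_simp

theorem lint_comp_smul (F : EuclideanSpace ℝ (Fin d) → ℝ≥0∞) (hF : Measurable F)
    (c : ℝ) (hc : c ≠ 0) :
    ∫⁻ x, F (c • x) = ENNReal.ofReal |(c ^ d)⁻¹| * ∫⁻ x, F x := by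
  have hmap := Measure.map_addHaar_smul (volume : Measure (EuclideanSpace ℝ (Fin d))) hc
  rw [finrank_euclideanSpace, Fintype.card_fin] at hmap
  have h1 : ∫⁻ x, F (c • x) = ∫⁻ y, F y ∂(Measure.map (c • ·) volume) := by
    rw [lintegral_map hF (measurable_const_smul c)]
  rw [h1, hmap, lintegral_smul_measure, smul_eq_mul]

theorem cell_int (g : EuclideanSpace ℝ (Fin d) → ℝ) (hg : Continuous g) (hgp : ZdPeriodic g)
    (r : ℝ) (hr : 0 < r) (lam : ℕ) (hlam : 0 < lam) (k : Fin d → Fin lam) :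
    ∫⁻ x in Qset lam k, ENNReal.ofReal (|g ((lam:ℝ) • x)| ^ r)
      = ENNReal.ofReal ((lam:ℝ)⁻¹ ^ d) * ∫⁻ x in cube0 d, ENNReal.ofReal (|g x| ^ r) := by
  have hl : (0:ℝ) < lam := Nat.cast_pos.2 hlam
  set H : EuclideanSpace ℝ (Fin d) → ℝ≥0∞ := fun z => ENNReal.ofReal (|g z| ^ r) with hH
  have hHm : Measurable H := by
    apply Measurable.ennreal_ofReal
    exact (hg.abs.rpow_const fun x => Or.inr hr.le).measurable
  set ck : EuclideanSpace ℝ (Fin d) := (EuclideanSpace.equiv (Fin d) ℝ).symm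
    (fun i => (k i : ℝ)/(lam:ℝ)) with hck
  have step1 : ∫⁻ x in Qset lam k, H ((lam:ℝ) • x)
      = ∫⁻ y, (Qset lam k).indicator (fun x => H ((lam:ℝ) • x)) (y + ck) := by
    rw [← lintegral_indicator (Qset_measurable lam k)]
    exact (lintegral_add_right_eq_self _ ck).symm
  have key : ∀ y : EuclideanSpace ℝ (Fin d),
      (Qset lam k).indicator (fun x => H ((lam:ℝ) • x)) (y + ck)
        = (cube0 d).indicator H ((lam:ℝ) • y) := by
    intro y
    have hmem : y + ck ∈ Qset lam k ↔ (lam:ℝ) • y ∈ cube0 d := by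
      constructor
      · intro h i
        have h' := h i
        have he : (y + ck) i = y i + (k i : ℝ)/(lam:ℝ) := rfl
        rw [he] at h'
        have he2 : ((lam:ℝ) • y) i = (lam:ℝ) * y i := rfl
        rw [he2]
        constructor
        · have hy0 : 0 ≤ y i := by linarith [h'.1]
          exact mul_nonneg hl.le hy0
        · have := h'.2
          have h3 : y i < 1/(lam:ℝ) := by
            have h4 : y i + (k i : ℝ)/(lam:ℝ) < ((k i : ℝ)+1)/(lam:ℝ) := this
            rw [add_div] at h4; linarith
          calc (lam:ℝ) * y i < (lam:ℝ) * (1/(lam:ℝ)) := mul_lt_mul_of_pos_left h3 hl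
            _ = 1 := by field_simp
      · intro h i
        have h' := h i
        have he2 : ((lam:ℝ) • y) i = (lam:ℝ) * y i := rfl
        rw [he2] at h'
        have he : (y + ck) i = y i + (k i : ℝ)/(lam:ℝ) := rfl
        rw [he]
        have hy0 : 0 ≤ y i := by
          by_contra hneg; push_neg at hneg; nlinarith [h'.1]
        have hy1 : y i < 1/(lam:ℝ) := by
          rw [lt_div_iff₀ hl]; linarith [h'.2]
        constructor
        · linarith
        · rw [add_div]; linarith
    have hper : H ((lam:ℝ) • (y + ck)) = H ((lam:ℝ) • y) := by
      have hsplit : (lam:ℝ) • (y + ck) = (lam:ℝ) • y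
          + (EuclideanSpace.equiv (Fin d) ℝ).symm (fun i => (((k i : ℕ) : ℤ) : ℝ)) := by
        rw [smul_add]
        congr 1
        ext i
        show (lam:ℝ) * ((k i : ℝ)/(lam:ℝ)) = _
        push_cast
        field_simp
        rfl
      rw [hH]
      simp only []
      rw [hsplit, hgp ((lam:ℝ) • y) (fun i => ((k i : ℕ) : ℤ))]
    by_cases hmm : y + ck ∈ Qset lam k
    · rw [Set.indicator_of_mem hmm, Set.indicator_of_mem (hmem.1 hmm), hper]
    · rw [Set.indicator_of_notMem hmm, Set.indicator_of_notMem (fun hc => hmm (hmem.2 hc))]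
  calc ∫⁻ x in Qset lam k, H ((lam:ℝ) • x)
      = ∫⁻ y, (cube0 d).indicator H ((lam:ℝ) • y) := by
        rw [step1]; congr 1; funext y; exact key y
    _ = ENNReal.ofReal |(((lam:ℝ)) ^ d)⁻¹| * ∫⁻ z, (cube0 d).indicator H z :=
        lint_comp_smul _ (hHm.indicator cube0_measurable) _ (ne_of_gt hl)
    _ = ENNReal.ofReal ((lam:ℝ)⁻¹ ^ d) * ∫⁻ x in cube0 d, H x := by
        rw [lintegral_indicator cube0_measurable]
        congr 2
        rw [abs_of_nonneg (by positivity), inv_pow]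

end IHAux

open IHAux Set ENNReal

/-- Improved Hölder inequality: for smooth `ℤ^d`-periodic `f, g` and `λ ∈ ℕ`, `λ > 0`,
`‖f g(λ·)‖_{L^r} ≤ ‖f‖_{L^r} ‖g‖_{L^r} + C λ^{−1/r} ‖f‖_{C¹} ‖g‖_{L^r}`, where
`‖f‖_{C¹} = sup_{[0,1]^d} |f| + sup_{[0,1]^d} |∇f|` and `C` depends only on `r` and `d`. -/
theorem improved_holder_inequality (d : ℕ) (hd : 1 ≤ d) (r : ℝ) (hr : 1 ≤ r) :
    ∃ C : ℝ, ∀ f g : EuclideanSpace ℝ (Fin d) → ℝ,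
      ContDiff ℝ (⊤ : ℕ∞) f → ContDiff ℝ (⊤ : ℕ∞) g → ZdPeriodic f → ZdPeriodic g →
      ∀ lam : ℕ, 0 < lam →
        (∫ x in unitCube d, |f x * g ((lam : ℝ) • x)| ^ r) ^ (1/r) ≤
          (∫ x in unitCube d, |f x| ^ r) ^ (1/r) * (∫ x in unitCube d, |g x| ^ r) ^ (1/r)
          + C * (lam : ℝ) ^ (-(1/r))
            * (sSup ((fun x => |f x|) '' unitCube d)
                + sSup ((fun x => ‖fderiv ℝ f x‖) '' unitCube d))
            * (∫ x in unitCube d, |g x| ^ r) ^ (1/r) := by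
  have hr0 : (0:ℝ) < r := lt_of_lt_of_le one_pos hr
  refine ⟨2 * Real.sqrt d, ?_⟩
  intro f g hf hg hfp hgp lam hlam
  have hl : (0:ℝ) < lam := Nat.cast_pos.2 hlam
  set M := sSup ((fun x => |f x|) '' unitCube d) with hM
  set L := sSup ((fun x => ‖fderiv ℝ f x‖) '' unitCube d) with hL
  have hfc := hf.continuous
  have hgc := hg.continuous
  have hM0 : 0 ≤ M := le_trans (abs_nonneg (f 0)) (le_sup_on_cube hfc.abs cube_nonempty)
  have hL0 : 0 ≤ L := le_trans (norm_nonneg _)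
    (le_sup_on_cube (hf.continuous_fderiv (by norm_num)).norm cube_nonempty)
  set ε := Real.sqrt d * L / lam with hε
  have hε0 : 0 ≤ ε := by positivity
  have hcont1 : Continuous fun x : EuclideanSpace ℝ (Fin d) => |f x * g ((lam:ℝ) • x)| ^ r :=
    ((hfc.mul (hgc.comp (continuous_const_smul ((lam:ℝ))))).abs).rpow_const
      fun x => Or.inr hr0.le
  have hcont2 : Continuous fun x : EuclideanSpace ℝ (Fin d) => |f x| ^ r :=
    (hfc.abs).rpow_const fun x => Or.inr hr0.le
  have hcont3 : Continuous fun x : EuclideanSpace ℝ (Fin d) => |g x| ^ r :=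
    (hgc.abs).rpow_const fun x => Or.inr hr0.le
  have hcont4 : Continuous fun x : EuclideanSpace ℝ (Fin d) => (|f x| + 2*ε) ^ r :=
    (hfc.abs.add continuous_const).rpow_const fun x => Or.inr hr0.le
  set Fl := ∫⁻ x in cube0 d, ENNReal.ofReal (|f x| ^ r) with hFl
  set Gl := ∫⁻ x in cube0 d, ENNReal.ofReal (|g x| ^ r) with hGl
  set Al := ∫⁻ x in cube0 d, ENNReal.ofReal (|f x * g ((lam:ℝ) • x)| ^ r) with hAl
  set Pl := ∫⁻ x in cube0 d, ENNReal.ofReal ((|f x| + 2*ε) ^ r) with hPl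
  have conv : ∀ φ : EuclideanSpace ℝ (Fin d) → ℝ, Continuous φ → (∀ x, 0 ≤ φ x) →
      ∫ x in unitCube d, φ x = (∫⁻ x in cube0 d, ENNReal.ofReal (φ x)).toReal := by
    intro φ hφ hφ0
    rw [setIntegral_congr_set cube_ae_eq,
      integral_eq_lintegral_of_nonneg_ae (Filter.Eventually.of_forall hφ0)
        hφ.aestronglyMeasurable]
  have hsub : cube0 d ⊆ unitCube d := fun x hx i => ⟨(hx i).1, (hx i).2.le⟩
  have hQsub : ∀ k : Fin d → Fin lam, Qset lam k ⊆ cube0 d := by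
    intro k
    rw [← Qset_iUnion lam hlam]
    exact Set.subset_iUnion (Qset lam) k
  have hckmem : ∀ k : Fin d → Fin lam,
      ((EuclideanSpace.equiv (Fin d) ℝ).symm fun i => (k i : ℝ)/(lam:ℝ)) ∈ unitCube d := by
    intro k i
    constructor
    · show (0:ℝ) ≤ (k i : ℝ)/(lam:ℝ)
      positivity
    · show ((k i : ℝ)/(lam:ℝ)) ≤ 1
      rw [div_le_one hl]
      have := (k i).isLt
      exact_mod_cast this.le
  have hosc : ∀ k : Fin d → Fin lam, ∀ x ∈ Qset lam k,
      |f x| ≤ |f ((EuclideanSpace.equiv (Fin d) ℝ).symm fun i => (k i : ℝ)/(lam:ℝ))| + ε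
      ∧ |f ((EuclideanSpace.equiv (Fin d) ℝ).symm fun i => (k i : ℝ)/(lam:ℝ))| ≤ |f x| + ε := by
    intro k x hx
    set ck := (EuclideanSpace.equiv (Fin d) ℝ).symm fun i => (k i : ℝ)/(lam:ℝ) with hckdef
    have hdist : ‖x - ck‖ ≤ Real.sqrt d / lam := by
      apply corner_dist lam hlam
      intro i
      have h1 := hx i
      have he : (x - ck) i = x i - (k i : ℝ)/(lam:ℝ) := rfl
      rw [show x i - ck i = x i - (k i : ℝ)/(lam:ℝ) from rfl]
      rw [abs_of_nonneg (by linarith [h1.1])]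
      have h2 := h1.2
      rw [add_div] at h2
      rw [one_div] at h2
      linarith [h2]
    have hLd : L * ‖x - ck‖ ≤ ε := by
      calc L * ‖x - ck‖ ≤ L * (Real.sqrt d / lam) := mul_le_mul_of_nonneg_left hdist hL0
        _ = ε := by rw [hε]; ring
    have hx' : x ∈ unitCube d := hsub (hQsub k hx)
    have hck' : ck ∈ unitCube d := hckmem k
    constructor
    · have h := lip_est hf hx' hck'
      rw [← hL] at h
      linarith [h, hLd]
    · have h := lip_est hf hck' hx'
      rw [← hL] at h
      have hnorm : ‖ck - x‖ = ‖x - ck‖ := norm_sub_rev _ _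
      rw [hnorm] at h
      linarith [h, hLd]
  have hm1 : Measurable fun x => ENNReal.ofReal (|f x * g ((lam:ℝ) • x)| ^ r) :=
    hcont1.measurable.ennreal_ofReal
  have hm3 : Measurable fun x : EuclideanSpace ℝ (Fin d) =>
      ENNReal.ofReal (|g ((lam:ℝ) • x)| ^ r) :=
    (((hgc.comp (continuous_const_smul ((lam:ℝ)))).abs.rpow_const
      fun x => Or.inr hr0.le)).measurable.ennreal_ofReal
  have hm4 : Measurable fun x => ENNReal.ofReal ((|f x| + 2*ε) ^ r) :=
    hcont4.measurable.ennreal_ofReal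
  have decomp : ∀ φ : EuclideanSpace ℝ (Fin d) → ℝ≥0∞, Measurable φ →
      ∫⁻ x in cube0 d, φ x = ∑ k : Fin d → Fin lam, ∫⁻ x in Qset lam k, φ x := by
    intro φ hφ
    rw [← Qset_iUnion lam hlam,
      lintegral_iUnion (fun k => Qset_measurable lam k) (Qset_disj lam), tsum_fintype]
  have cell : ∀ k : Fin d → Fin lam,
      ∫⁻ x in Qset lam k, ENNReal.ofReal (|f x * g ((lam:ℝ) • x)| ^ r)
        ≤ (∫⁻ x in Qset lam k, ENNReal.ofReal ((|f x| + 2*ε) ^ r)) * Gl := by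
    intro k
    set ck := (EuclideanSpace.equiv (Fin d) ℝ).symm fun i => (k i : ℝ)/(lam:ℝ) with hckdef
    set a := |f ck| + ε with ha
    have ha0 : 0 ≤ a := by rw [ha]; positivity
    have h1 : ∫⁻ x in Qset lam k, ENNReal.ofReal (|f x * g ((lam:ℝ) • x)| ^ r)
        ≤ ∫⁻ x in Qset lam k,
            ENNReal.ofReal (a ^ r) * ENNReal.ofReal (|g ((lam:ℝ) • x)| ^ r) := by
      apply setLIntegral_mono (measurable_const.mul hm3)
      intro x hx
      rw [abs_mul, Real.mul_rpow (abs_nonneg _) (abs_nonneg _),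
        ENNReal.ofReal_mul (by positivity)]
      apply mul_le_mul_left
      apply ENNReal.ofReal_le_ofReal
      exact Real.rpow_le_rpow (abs_nonneg _) (hosc k x hx).1 hr0.le
    rw [lintegral_const_mul _ hm3, cell_int g hgc hgp r hr0 lam hlam k, ← hGl,
      ← mul_assoc] at h1
    refine le_trans h1 (mul_le_mul_left ?_ Gl)
    have hconst : ENNReal.ofReal (a ^ r) * ENNReal.ofReal (((lam:ℝ))⁻¹ ^ d)
        = ∫⁻ _x in Qset lam k, ENNReal.ofReal (a ^ r) := by
      rw [setLIntegral_const, vol_Qset lam hlam k]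
    rw [hconst]
    apply setLIntegral_mono hm4
    intro x hx
    apply ENNReal.ofReal_le_ofReal
    apply Real.rpow_le_rpow ha0 _ hr0.le
    have h2 := (hosc k x hx).2
    rw [ha]; linarith
  have main1 : Al ≤ Pl * Gl := by
    rw [hAl, decomp _ hm1, hPl, decomp _ hm4, Finset.sum_mul]
    exact Finset.sum_le_sum fun k _ => cell k
  have mink : Pl ^ (1/r) ≤ Fl ^ (1/r) + ENNReal.ofReal (2*ε) := by
    have haem1 : AEMeasurable (fun x => ENNReal.ofReal |f x|)
        (volume.restrict (cube0 d)) :=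
      (hfc.abs.measurable.ennreal_ofReal).aemeasurable
    have h := ENNReal.lintegral_Lp_add_le haem1
      (aemeasurable_const (b := ENNReal.ofReal (2*ε))) hr
    have e1 : ∀ x : EuclideanSpace ℝ (Fin d),
        (ENNReal.ofReal |f x| + ENNReal.ofReal (2*ε)) ^ r
          = ENNReal.ofReal ((|f x| + 2*ε) ^ r) := by
      intro x
      rw [← ENNReal.ofReal_add (abs_nonneg _) (by positivity),
        ENNReal.ofReal_rpow_of_nonneg (by positivity) hr0.le]
    have e2 : ∀ x : EuclideanSpace ℝ (Fin d),
        (ENNReal.ofReal |f x|) ^ r = ENNReal.ofReal (|f x| ^ r) :=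
      fun x => ENNReal.ofReal_rpow_of_nonneg (abs_nonneg _) hr0.le
    simp only [Pi.add_apply, e1, e2] at h
    have e3 : (∫⁻ _x in cube0 d, (ENNReal.ofReal (2*ε)) ^ r) ^ (1/r)
        = ENNReal.ofReal (2*ε) := by
      rw [setLIntegral_const, vol_cube0, mul_one, ← ENNReal.rpow_mul,
        mul_one_div, div_self (ne_of_gt hr0), ENNReal.rpow_one]
    rw [e3] at h
    exact h
  have main2 : Al ^ (1/r) ≤ Fl ^ (1/r) * Gl ^ (1/r) + ENNReal.ofReal (2*ε) * Gl ^ (1/r) := by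
    calc Al ^ (1/r) ≤ (Pl * Gl) ^ (1/r) := ENNReal.rpow_le_rpow main1 (by positivity)
      _ = Pl ^ (1/r) * Gl ^ (1/r) := ENNReal.mul_rpow_of_nonneg _ _ (by positivity)
      _ ≤ (Fl ^ (1/r) + ENNReal.ofReal (2*ε)) * Gl ^ (1/r) := mul_le_mul_left mink _
      _ = _ := add_mul _ _ _
  have bound : ∀ φ : EuclideanSpace ℝ (Fin d) → ℝ, Continuous φ →
      (∫⁻ x in cube0 d, ENNReal.ofReal (|φ x| ^ r)) ≠ ⊤ := by
    intro φ hφ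
    have hBd : ∀ x ∈ cube0 d, ENNReal.ofReal (|φ x| ^ r)
        ≤ ENNReal.ofReal ((sSup ((fun x => |φ x|) '' unitCube d)) ^ r) := by
      intro x hx
      apply ENNReal.ofReal_le_ofReal
      exact Real.rpow_le_rpow (abs_nonneg _) (le_sup_on_cube hφ.abs (hsub hx)) hr0.le
    have h := setLIntegral_mono (μ := volume) measurable_const hBd
    refine ne_of_lt (lt_of_le_of_lt h ?_)
    rw [setLIntegral_const, vol_cube0, mul_one]
    exact ENNReal.ofReal_lt_top
  have hFtop : Fl ≠ ⊤ := bound f hfc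
  have hGtop : Gl ≠ ⊤ := bound g hgc
  have hF1top : Fl ^ (1/r) * Gl ^ (1/r) ≠ ⊤ :=
    ENNReal.mul_ne_top (ENNReal.rpow_ne_top_of_nonneg (by positivity) hFtop)
      (ENNReal.rpow_ne_top_of_nonneg (by positivity) hGtop)
  have hF2top : ENNReal.ofReal (2*ε) * Gl ^ (1/r) ≠ ⊤ :=
    ENNReal.mul_ne_top ENNReal.ofReal_ne_top
      (ENNReal.rpow_ne_top_of_nonneg (by positivity) hGtop)
  have hRtop : Fl ^ (1/r) * Gl ^ (1/r) + ENNReal.ofReal (2*ε) * Gl ^ (1/r) ≠ ⊤ :=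
    ENNReal.add_ne_top.2 ⟨hF1top, hF2top⟩
  have cF : ∫ x in unitCube d, |f x| ^ r = Fl.toReal := conv _ hcont2 (fun x => by positivity)
  have cG : ∫ x in unitCube d, |g x| ^ r = Gl.toReal := conv _ hcont3 (fun x => by positivity)
  have cA : ∫ x in unitCube d, |f x * g ((lam:ℝ) • x)| ^ r = Al.toReal :=
    conv _ hcont1 (fun x => by positivity)
  rw [cF, cG, cA]
  have tA : Al.toReal ^ (1/r) = (Al ^ (1/r)).toReal := ENNReal.toReal_rpow _ _
  have tF : Fl.toReal ^ (1/r) = (Fl ^ (1/r)).toReal := ENNReal.toReal_rpow _ _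
  have tG : Gl.toReal ^ (1/r) = (Gl ^ (1/r)).toReal := ENNReal.toReal_rpow _ _
  rw [tA, tF, tG]
  have step := ENNReal.toReal_mono hRtop main2
  rw [ENNReal.toReal_add hF1top hF2top, ENNReal.toReal_mul, ENNReal.toReal_mul,
    ENNReal.toReal_ofReal (by positivity)] at step
  refine le_trans step ?_
  have hfinal : 2*ε ≤ 2 * Real.sqrt d * (lam:ℝ) ^ (-(1/r)) * (M + L) := by
    have h1 : (lam:ℝ)⁻¹ ≤ (lam:ℝ) ^ (-(1/r)) := by
      rw [← Real.rpow_neg_one]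
      apply Real.rpow_le_rpow_of_exponent_le (by exact_mod_cast hlam)
      have h2 : 1/r ≤ 1 := by rw [div_le_one hr0]; exact hr
      linarith
    have hlr0 : (0:ℝ) ≤ (lam:ℝ) ^ (-(1/r)) := le_trans (by positivity) h1
    calc 2*ε = 2 * Real.sqrt d * ((lam:ℝ)⁻¹ * L) := by rw [hε]; ring
      _ ≤ 2 * Real.sqrt d * ((lam:ℝ) ^ (-(1/r)) * (M + L)) := by
          apply mul_le_mul_of_nonneg_left _ (by positivity)
          apply mul_le_mul h1 (by linarith) hL0 hlr0
      _ = 2 * Real.sqrt d * (lam:ℝ) ^ (-(1/r)) * (M + L) := by ring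
  have hT0 : (0:ℝ) ≤ (Gl ^ (1/r)).toReal := ENNReal.toReal_nonneg
  exact add_le_add_right (mul_le_mul_of_nonneg_right hfinal hT0) _


end
end

section
/- For every d ≥ 1 there exists a linear map T from the space of smooth ℤ^d-periodic functions f : ℝ^d → ℝ with ∫_{[0,1]^d} f = 0 into the space of smooth ℤ^d-periodic vector fields ℝ^d → ℝ^d, such that: (i) div(Tf) = f for every such f; and (ii) for every r ∈ [1,∞] there is a constant C_r (depending only on r and d) with ‖Tf‖_{L^r([0,1]^d)} ≤ C_r ‖f‖_{L^r([0,1]^d)} for every such f. -/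
open MeasureTheory
open scoped ENNReal

set_option maxHeartbeats 1000000
set_option synthInstance.maxHeartbeats 400000

noncomputable section

/-- The divergence `div v = Σ_j ∂_j v_j` of a vector field on `ℝ^d`. -/
noncomputable def diverg {d : ℕ} (v : EuclideanSpace ℝ (Fin d) → EuclideanSpace ℝ (Fin d))
    (x : EuclideanSpace ℝ (Fin d)) : ℝ :=
  ∑ j, fderiv ℝ v x (EuclideanSpace.single j 1) j

namespace Antidiv

variable {d : ℕ}

local notation "E" => EuclideanSpace ℝ (Fin d)

/-- Update one coordinate. -/
def upd (x : E) (j : Fin d) (t : ℝ) : E := WithLp.toLp 2 (Function.update x j t)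

/-- Averaging in coordinate `j`. -/
def avgF (j : Fin d) (f : E → ℝ) : E → ℝ := fun x => ∫ t in (0:ℝ)..1, f (upd x j t)

/-- Primitive in coordinate `j` (written with a fixed integration domain). -/
def primF (j : Fin d) (f : E → ℝ) : E → ℝ :=
  fun x => ∫ u in (0:ℝ)..1, (x j) • f (upd x j ((x j) * u))

/-- Iterated averaging in the first `k` coordinates. -/
def AIt (f : E → ℝ) : ℕ → (E → ℝ)
  | 0 => f
  | (k+1) => if h : k < d then avgF ⟨k, h⟩ (AIt f k) else AIt f k

/-- The `j`-th "mean-zero in direction `j`" piece. -/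
def hpiece (f : E → ℝ) (j : Fin d) : E → ℝ :=
  fun y => AIt f j.val y - AIt f (j.val+1) y

/-- The antidivergence candidate. -/
def Phi (f : E → ℝ) : E → E :=
  fun x => (EuclideanSpace.equiv (Fin d) ℝ).symm (fun j => primF j (hpiece f j) x)

/-! ### Basic facts about `upd` -/

lemma upd_apply' (x : E) (j : Fin d) (t : ℝ) (i : Fin d) :
    upd x j t i = if i = j then t else x i :=
  Function.update_apply x j t i

lemma upd_smooth (j : Fin d) :
    ContDiff ℝ (⊤ : ℕ∞) (fun p : E × ℝ => upd p.1 j p.2) := by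
  have h : (fun p : E × ℝ => upd p.1 j p.2)
      = (EuclideanSpace.equiv (Fin d) ℝ).symm ∘
        (fun p : E × ℝ => fun i => if i = j then p.2 else p.1 i) := by
    funext p
    ext i
    rw [upd_apply']
    rfl
  rw [h, ContinuousLinearEquiv.comp_contDiff_iff, contDiff_pi]
  intro i
  by_cases hij : i = j
  · simpa [hij] using contDiff_snd
  · have : ContDiff ℝ (⊤ : ℕ∞) (fun p : E × ℝ => p.1 i) :=
      (EuclideanSpace.proj (𝕜 := ℝ) i).contDiff.comp contDiff_fst
    simpa [hij] using this

lemma upd_mem_cube {x : E} (hx : x ∈ unitCube d) {j : Fin d} {t : ℝ}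
    (ht : t ∈ Set.Icc (0:ℝ) 1) : upd x j t ∈ unitCube d := by
  intro i
  rcases eq_or_ne i j with rfl | h
  · simpa [upd] using ht
  · simpa [upd, Function.update_of_ne h] using hx i

lemma upd_apply (x : E) (j : Fin d) (t : ℝ) (i : Fin d) :
    upd x j t i = if i = j then t else x i :=
  Function.update_apply x j t i

lemma add_apply'' (x y : E) (i : Fin d) : (x + y) i = x i + y i := rfl

lemma upd_add (x : E) (c : E) (j : Fin d) (t : ℝ) :
    upd (x + c) j t = upd x j t + upd c j 0 := by
  ext i
  rw [add_apply'', upd_apply, upd_apply, upd_apply, add_apply'']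
  rcases eq_or_ne i j with rfl | h
  · simp
  · simp [h]

lemma add_apply' (x y : E) (i : Fin d) : (x + y) i = x i + y i := rfl

/-- An integer translation vector. -/
def tr (m : Fin d → ℤ) : E := (EuclideanSpace.equiv (Fin d) ℝ).symm fun i => (m i : ℝ)

lemma tr_apply (m : Fin d → ℤ) (i : Fin d) : tr m i = (m i : ℝ) := rfl

lemma upd_tr_zero (m : Fin d → ℤ) (j : Fin d) :
    upd (tr m) j 0 = tr (Function.update m j 0) := by
  ext i
  rcases eq_or_ne i j with rfl | h
  · simp [upd, tr]
  · simp [upd, tr, Function.update_of_ne h]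

lemma upd_add_one (x : E) (j : Fin d) (t : ℝ) :
    upd x j (t + 1) = upd x j t + tr (Function.update (0 : Fin d → ℤ) j 1) := by
  ext i
  rw [upd_apply, add_apply'', upd_apply, tr_apply]
  rcases eq_or_ne i j with rfl | h
  · simp
  · simp [h, Function.update_of_ne h]

lemma continuous_upd_right (x : E) (j : Fin d) :
    Continuous (fun t : ℝ => upd x j t) :=
  (upd_smooth j).continuous.comp (continuous_const.prodMk continuous_id)

/-! ### Smoothness of parametric integrals -/

theorem contDiff_param_aux (n : ℕ) :
    ∀ (V : Type) [NormedAddCommGroup V] [NormedSpace ℝ V] [CompleteSpace V]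
      (F : E × ℝ → V), ContDiff ℝ (⊤ : ℕ∞) F →
      ContDiff ℝ (n : ℕ) (fun x : E => ∫ t in (0:ℝ)..1, F (x, t)) := by
  induction n with
  | zero =>
    intro V _ _ _ F hF
    rw [show (((0:ℕ) : ℕ) : WithTop ℕ∞) = 0 from rfl, contDiff_zero]
    exact intervalIntegral.continuous_parametric_intervalIntegral_of_continuous'
      (f := fun (x : E) (t : ℝ) => F (x, t))
      (by exact hF.continuous) 0 1
  | succ n ih =>
    intro V _ _ _ F hF
    set DF : E × ℝ → (E →L[ℝ] V) :=
      fun p => (fderiv ℝ F p).comp (ContinuousLinearMap.inl ℝ E ℝ) with hDFdef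
    have h1 : ContDiff ℝ (⊤ : ℕ∞) (fderiv ℝ F) :=
      hF.fderiv_right (by exact_mod_cast (by simp : (⊤:ℕ∞) + 1 ≤ ⊤))
    have hDFsmooth : ContDiff ℝ (⊤ : ℕ∞) DF := by
      have h2 := (((ContinuousLinearMap.compL ℝ E (E × ℝ) V).flip
        (ContinuousLinearMap.inl ℝ E ℝ)).contDiff (n := (⊤ : ℕ∞))).comp h1
      exact h2
    have key : ∀ x₀ : E, HasFDerivAt (fun x => ∫ t in (0:ℝ)..1, F (x, t))
        (∫ t in (0:ℝ)..1, DF (x₀, t)) x₀ := by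
      intro x₀
      obtain ⟨C, hC⟩ := ((isCompact_closedBall x₀ 1).prod
        (isCompact_Icc (a := (0:ℝ)) (b := 1))).exists_bound_of_continuousOn
        (hDFsmooth.continuous.continuousOn)
      apply intervalIntegral.hasFDerivAt_integral_of_dominated_of_fderiv_le
        (F' := fun x t => DF (x, t)) (bound := fun _ => C) (s := Metric.ball x₀ 1) (Metric.ball_mem_nhds x₀ one_pos)
      · exact Filter.Eventually.of_forall fun x =>
          ((hF.continuous.comp (continuous_const.prodMk continuous_id)).aestronglyMeasurable)
      · exact (hF.continuous.comp (continuous_const.prodMk continuous_id)).intervalIntegrable 0 1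
      · exact (hDFsmooth.continuous.comp (continuous_const.prodMk continuous_id)).aestronglyMeasurable
      · refine Filter.Eventually.of_forall fun t ht x hx => hC (x, t) ?_
        have ht' : t ∈ Set.Ioc (0:ℝ) 1 := by
          simpa [Set.uIoc_of_le (zero_le_one (α := ℝ))] using ht
        exact ⟨Metric.ball_subset_closedBall hx, ht'.1.le, ht'.2⟩
      · exact intervalIntegrable_const
      · refine Filter.Eventually.of_forall fun t ht x hx => ?_
        have hFd : HasFDerivAt F (fderiv ℝ F (x, t)) (x, t) :=
          (hF.differentiable (by simp) (x, t)).hasFDerivAt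
        have h2 : HasFDerivAt (fun y : E => (y, t)) (ContinuousLinearMap.inl ℝ E ℝ) x :=
          hasFDerivAt_prodMk_left x t
        exact hFd.comp x h2
    have hdiff : Differentiable ℝ (fun x => ∫ t in (0:ℝ)..1, F (x, t)) :=
      fun x => (key x).differentiableAt
    have hfd : (fderiv ℝ (fun x => ∫ t in (0:ℝ)..1, F (x, t)))
        = fun x₀ => ∫ t in (0:ℝ)..1, DF (x₀, t) := funext fun x₀ => (key x₀).fderiv
    rw [show (((n+1:ℕ)) : WithTop ℕ∞) = ((n:ℕ) : WithTop ℕ∞) + 1 by push_cast; ring,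
      contDiff_succ_iff_fderiv]
    refine ⟨hdiff, ?_, ?_⟩
    · intro h
      exact absurd h (by simp)
    · rw [hfd]
      exact ih (E →L[ℝ] V) (fun p => DF p) hDFsmooth

theorem contDiff_param {V : Type} [NormedAddCommGroup V] [NormedSpace ℝ V] [CompleteSpace V]
    {F : E × ℝ → V} (hF : ContDiff ℝ (⊤ : ℕ∞) F) :
    ContDiff ℝ (⊤ : ℕ∞) (fun x : E => ∫ t in (0:ℝ)..1, F (x, t)) := by
  rw [show ((⊤:ℕ∞) : WithTop ℕ∞) = ((⊤:ℕ∞) : WithTop ℕ∞) from rfl, contDiff_infty]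
  exact fun n => contDiff_param_aux n V F hF

lemma avgF_contDiff {f : E → ℝ} (hf : ContDiff ℝ (⊤ : ℕ∞) f) (j : Fin d) :
    ContDiff ℝ (⊤ : ℕ∞) (avgF j f) :=
  contDiff_param (hf.comp (upd_smooth j))

lemma primF_contDiff {f : E → ℝ} (hf : ContDiff ℝ (⊤ : ℕ∞) f) (j : Fin d) :
    ContDiff ℝ (⊤ : ℕ∞) (primF j f) := by
  have h1 : ContDiff ℝ (⊤ : ℕ∞) (fun p : E × ℝ => p.1 j) :=
    (EuclideanSpace.proj (𝕜 := ℝ) j).contDiff.comp contDiff_fst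
  have h2 : ContDiff ℝ (⊤ : ℕ∞) (fun p : E × ℝ => ((p.1, (p.1 j) * p.2) : E × ℝ)) :=
    contDiff_fst.prodMk (h1.mul contDiff_snd)
  have h3 : ContDiff ℝ (⊤ : ℕ∞) (fun p : E × ℝ => upd p.1 j ((p.1 j) * p.2)) :=
    (upd_smooth j).comp h2
  exact contDiff_param (h1.smul (hf.comp h3))

lemma AIt_contDiff {f : E → ℝ} (hf : ContDiff ℝ (⊤ : ℕ∞) f) (k : ℕ) :
    ContDiff ℝ (⊤ : ℕ∞) (AIt f k) := by
  induction k with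
  | zero => exact hf
  | succ k ih =>
    by_cases h : k < d
    · simpa [AIt, h] using avgF_contDiff ih _
    · simpa [AIt, h] using ih

lemma hpiece_contDiff {f : E → ℝ} (hf : ContDiff ℝ (⊤ : ℕ∞) f) (j : Fin d) :
    ContDiff ℝ (⊤ : ℕ∞) (hpiece f j) :=
  (AIt_contDiff hf _).sub (AIt_contDiff hf _)

/-! ### FTC form of primF and its derivative -/

lemma primF_eq {f : E → ℝ} (hf : Continuous f) (j : Fin d) (x : E) :
    primF j f x = ∫ t in (0:ℝ)..(x j), f (upd x j t) := by
  by_cases hc0 : x j = 0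
  · simp only [primF, hc0, zero_smul, intervalIntegral.integral_zero,
      intervalIntegral.integral_same]
  · simp only [primF]
    rw [intervalIntegral.integral_smul]
    rw [intervalIntegral.integral_comp_mul_left (fun t => f (upd x j t)) hc0]
    rw [smul_smul, mul_inv_cancel₀ hc0, one_smul, mul_zero, mul_one]

lemma upd_self (x : E) (j : Fin d) : upd x j (x j) = x := by
  ext i
  rw [upd_apply]
  rcases eq_or_ne i j with rfl | hij
  · simp
  · simp [hij]

lemma primF_deriv {f : E → ℝ} (hf : Continuous f) (j : Fin d) (x : E)
    (hdiff : DifferentiableAt ℝ (primF j f) x) :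
    fderiv ℝ (primF j f) x (EuclideanSpace.single j 1) = f x := by
  classical
  set φ : ℝ → ℝ := fun t => f (upd x j t) with hφdef
  have hφc : Continuous φ := hf.comp (continuous_upd_right x j)
  set v : E := EuclideanSpace.single j 1 with hvdef
  have hline : HasDerivAt (fun s : ℝ => x + s • v) v 0 := by
    simpa using ((hasDerivAt_id (0:ℝ)).smul_const v).const_add x
  have hq1 : HasDerivAt (fun s : ℝ => primF j f (x + s • v))
      (fderiv ℝ (primF j f) x v) 0 := by
    have hL : HasFDerivAt (primF j f) (fderiv ℝ (primF j f) x) (x + (0:ℝ) • v) := by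
      rw [show x + (0:ℝ) • v = x by simp]
      exact hdiff.hasFDerivAt
    exact hL.comp_hasDerivAt 0 hline
  have hq2 : HasDerivAt (fun s : ℝ => primF j f (x + s • v)) (φ (x j)) 0 := by
    have heq : (fun s : ℝ => primF j f (x + s • v))
        = fun s => ∫ t in (0:ℝ)..(x j + s), φ t := by
      funext s
      rw [primF_eq hf]
      have h1 : (x + s • v) j = x j + s := by
        rw [add_apply'']
        have : v j = 1 := by simp [hvdef, EuclideanSpace.single_apply]
        show x j + s • v j = x j + s
        rw [this, smul_eq_mul, mul_one]
      have h2 : ∀ t, upd (x + s • v) j t = upd x j t := by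
        intro t
        ext i
        rw [upd_apply, upd_apply]
        by_cases hij : i = j
        · simp [hij]
        · have hv : v i = 0 := by simp [hvdef, EuclideanSpace.single_apply, hij]
          simp only [if_neg hij, add_apply'']
          rw [show (s • v) i = s * v i from rfl, hv, mul_zero, add_zero]
      rw [h1]
      apply intervalIntegral.integral_congr
      intro t _
      show f (upd (x + s • v) j t) = φ t
      rw [h2 t]
    rw [heq]
    have hP : HasDerivAt (fun b => ∫ t in (0:ℝ)..b, φ t) (φ (x j)) (x j) :=
      intervalIntegral.integral_hasDerivAt_right (hφc.intervalIntegrable 0 (x j))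
        (hφc.stronglyMeasurableAtFilter volume (nhds (x j))) hφc.continuousAt
    have hP' : HasDerivAt (fun b => ∫ t in (0:ℝ)..b, φ t) (φ (x j)) (x j + (0:ℝ)) := by
      rwa [add_zero]
    have hinner : HasDerivAt (fun s : ℝ => x j + s) (1:ℝ) 0 := by
      simpa using (hasDerivAt_id (0:ℝ)).const_add (x j)
    have hc := hP'.comp (0:ℝ) hinner
    rwa [mul_one] at hc
  have huniq := hq1.unique hq2
  rw [huniq, hφdef]
  show f (upd x j (x j)) = f x
  rw [upd_self]

/-! ### AIt structure -/

lemma AIt_succ (f : E → ℝ) (j : Fin d) :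
    AIt f (j.val + 1) = avgF j (AIt f j.val) := by
  have h : j.val < d := j.isLt
  simp [AIt, h]

lemma AIt_indep (f : E → ℝ) : ∀ (k : ℕ) (i : Fin d), (i : ℕ) < k →
    ∀ (x : E) (t : ℝ), AIt f k (upd x i t) = AIt f k x := by
  intro k
  induction k with
  | zero => intro i hi; omega
  | succ k ih =>
    intro i hi x t
    by_cases h : k < d
    · have hik : (i : ℕ) ≤ k := Nat.lt_succ_iff.mp hi
      simp only [AIt, dif_pos h, avgF]
      rcases eq_or_ne i ⟨k, h⟩ with rfl | hne
      · congr 1; funext s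
        congr 1
        ext i'
        rw [upd_apply, upd_apply, upd_apply]
        by_cases h' : i' = ⟨k, h⟩ <;> simp [h']
      · have hik' : (i : ℕ) < k := by
          rcases Nat.lt_or_ge (i : ℕ) k with h' | h'
          · exact h'
          · exfalso; exact hne (Fin.ext (le_antisymm hik h'))
        congr 1; funext s
        rw [show upd (upd x i t) ⟨k, h⟩ s = upd (upd x ⟨k, h⟩ s) i t from ?_, ih i hik' _ t]
        show WithLp.toLp 2 (Function.update (Function.update x.ofLp i t) _ s)
            = WithLp.toLp 2 (Function.update (Function.update x.ofLp _ s) i t)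
        exact congrArg (WithLp.toLp 2) (Function.update_comm hne t s x.ofLp)
    · have : (i : ℕ) < k := lt_of_lt_of_le i.isLt (le_of_not_gt h) |>.trans_le (le_refl _)
      simp only [AIt, dif_neg h]
      exact ih i this x t

lemma avgF_AIt_succ (f : E → ℝ) (j : Fin d) (x : E) :
    avgF j (AIt f (j.val + 1)) x = AIt f (j.val + 1) x := by
  have : ∀ t : ℝ, AIt f (j.val + 1) (upd x j t) = AIt f (j.val + 1) x := fun t =>
    AIt_indep f (j.val + 1) j (Nat.lt_succ_self _) x t
  simp only [avgF]
  rw [intervalIntegral.integral_congr (g := fun _ => AIt f (j.val + 1) x)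
    (fun t _ => this t)]
  simp

lemma avgF_hpiece {f : E → ℝ} (hf : ContDiff ℝ (⊤ : ℕ∞) f) (j : Fin d) (x : E) :
    avgF j (hpiece f j) x = 0 := by
  have h1 : IntervalIntegrable (fun t => AIt f j.val (upd x j t)) volume 0 1 :=
    ((AIt_contDiff hf j.val).continuous.comp (continuous_upd_right x j)).intervalIntegrable 0 1
  have h2 : IntervalIntegrable (fun t => AIt f (j.val+1) (upd x j t)) volume 0 1 :=
    ((AIt_contDiff hf (j.val+1)).continuous.comp (continuous_upd_right x j)).intervalIntegrable 0 1
  have e1 : avgF j (hpiece f j) x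
      = avgF j (AIt f j.val) x - avgF j (AIt f (j.val+1)) x := by
    simp only [avgF, hpiece]
    exact intervalIntegral.integral_sub h1 h2
  rw [e1, avgF_AIt_succ, ← AIt_succ, sub_self]

/-! ### Periodicity -/

lemma avgF_periodic {f : E → ℝ} (hper : ZdPeriodic f) (j : Fin d) :
    ZdPeriodic (avgF j f) := by
  intro x m
  simp only [avgF]
  congr 1; funext t
  have : upd (x + tr m) j t = upd x j t + tr (Function.update m j 0) := by
    rw [upd_add, upd_tr_zero]
  show f (upd (x + tr m) j t) = f (upd x j t)
  rw [this]
  exact hper (upd x j t) (Function.update m j 0)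

lemma AIt_periodic {f : E → ℝ} (hper : ZdPeriodic f) (k : ℕ) :
    ZdPeriodic (AIt f k) := by
  induction k with
  | zero => exact hper
  | succ k ih =>
    by_cases h : k < d
    · simpa [AIt, h] using avgF_periodic ih _
    · simpa [AIt, h] using ih

lemma hpiece_periodic {f : E → ℝ} (hper : ZdPeriodic f) (j : Fin d) :
    ZdPeriodic (hpiece f j) := by
  intro x m
  have h1 := AIt_periodic (f := f) hper j.val x m
  have h2 := AIt_periodic (f := f) hper (j.val+1) x m
  simp only [hpiece]
  rw [h1, h2]

lemma primF_hpiece_periodic {f : E → ℝ} (hf : ContDiff ℝ (⊤ : ℕ∞) f)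
    (hper : ZdPeriodic f) (j : Fin d) : ZdPeriodic (primF j (hpiece f j)) := by
  intro x m
  show primF j (hpiece f j) (x + tr m) = primF j (hpiece f j) x
  have hc : Continuous (hpiece f j) := (hpiece_contDiff hf j).continuous
  have hper' : ZdPeriodic (hpiece f j) := hpiece_periodic hper j
  set φ : ℝ → ℝ := fun t => hpiece f j (upd x j t) with hφdef
  have hφc : Continuous φ := hc.comp (continuous_upd_right x j)
  have hint : ∀ a b : ℝ, IntervalIntegrable φ volume a b := fun a b =>
    hφc.intervalIntegrable a b
  have hper1 : Function.Periodic φ 1 := by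
    intro t
    show hpiece f j (upd x j (t+1)) = hpiece f j (upd x j t)
    rw [upd_add_one]
    exact hper' (upd x j t) _
  have hmean : ∫ t in (0:ℝ)..1, φ t = 0 := avgF_hpiece hf j x
  have keyupd : ∀ t, upd (x + tr m) j t = upd x j t + tr (Function.update m j 0) := by
    intro t
    rw [upd_add, upd_tr_zero]
  have e1 : primF j (hpiece f j) (x + tr m) = ∫ t in (0:ℝ)..(x j + (m j : ℝ)), φ t := by
    rw [primF_eq hc]
    have hxm : (x + tr m) j = x j + (m j : ℝ) := rfl
    rw [hxm]
    apply intervalIntegral.integral_congr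
    intro t _
    show hpiece f j (upd (x + tr m) j t) = φ t
    rw [keyupd t]
    exact hper' (upd x j t) _
  have e2 : ∫ t in (x j)..(x j + (m j : ℝ)), φ t = 0 := by
    have h3 : x j + (m j : ℝ) = x j + (m j) • (1:ℝ) := by simp
    rw [h3, Function.Periodic.intervalIntegral_add_zsmul_eq hper1 (m j) (x j) hint,
      Function.Periodic.intervalIntegral_add_eq hper1 (x j) 0]
    simp [hmean]
  rw [e1, ← intervalIntegral.integral_add_adjacent_intervals (hint 0 (x j))
    (hint (x j) (x j + (m j : ℝ))), e2, add_zero]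
  rw [primF_eq hc]

/-! ### Measure-theoretic transfer -/

def nu1 : Measure ℝ := volume.restrict (Set.Ioc (0:ℝ) 1)

instance : IsProbabilityMeasure (nu1) := by
  constructor
  simp [nu1, Real.volume_Ioc]

def PiM (d : ℕ) : Measure (Fin d → ℝ) := Measure.pi (fun _ => nu1)

instance : IsProbabilityMeasure (PiM d) := by
  unfold PiM; infer_instance

lemma restrict_box_eq :
    (volume : Measure (Fin d → ℝ)).restrict (Set.univ.pi fun _ => Set.Icc (0:ℝ) 1) = PiM d := by
  refine (Measure.pi_eq ?_).symm
  intro s hs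
  rw [Measure.restrict_apply (MeasurableSet.univ_pi hs)]
  have h1 : (Set.univ.pi s) ∩ (Set.univ.pi fun _ => Set.Icc (0:ℝ) 1)
      = Set.univ.pi (fun i => s i ∩ Set.Icc 0 1) := by
    rw [Set.pi_inter_distrib]
  rw [h1, show (volume : Measure (Fin d → ℝ)) = Measure.pi (fun _ => volume) from rfl,
    Measure.pi_pi]
  refine Finset.prod_congr rfl fun i _ => ?_
  show volume (s i ∩ Set.Icc (0:ℝ) 1) = nu1 (s i)
  rw [nu1, Measure.restrict_apply (hs i)]
  exact measure_congr (Filter.EventuallyEq.inter (Filter.EventuallyEq.refl _ _)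
    (MeasureTheory.Ioc_ae_eq_Icc (μ := volume)).symm)

lemma cube_transfer (ψ : E → ℝ≥0∞) (hψ : Measurable ψ) :
    ∫⁻ x in unitCube d, ψ x
      = ∫⁻ y, ψ (((MeasurableEquiv.toLp 2 (Fin d → ℝ)).symm).symm y) ∂(PiM d) := by
  have mp := EuclideanSpace.volume_preserving_symm_measurableEquiv_toLp (Fin d)
  have hbox : MeasurableSet (Set.univ.pi fun _ : Fin d => Set.Icc (0:ℝ) 1) :=
    MeasurableSet.univ_pi fun _ => measurableSet_Icc
  have hpre : ((MeasurableEquiv.toLp 2 (Fin d → ℝ)).symm)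
      ⁻¹' (Set.univ.pi fun _ => Set.Icc (0:ℝ) 1) = unitCube d := by
    ext x
    simp only [Set.mem_preimage, Set.mem_univ_pi, unitCube, Set.mem_setOf_eq]
    exact Iff.rfl
  have mp2 : MeasurePreserving ((MeasurableEquiv.toLp 2 (Fin d → ℝ)).symm)
      (volume.restrict (unitCube d))
      ((volume : Measure (Fin d → ℝ)).restrict (Set.univ.pi fun _ => Set.Icc (0:ℝ) 1)) := by
    have h := mp.restrict_preimage hbox
    rwa [hpre] at h
  have h := mp2.lintegral_comp_emb (MeasurableEquiv.measurableEmbedding _)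
    (fun y => ψ (((MeasurableEquiv.toLp 2 (Fin d → ℝ)).symm).symm y))
  simp only [MeasurableEquiv.symm_apply_apply] at h
  rw [restrict_box_eq] at h
  exact h

lemma fubini_update (ψ : (Fin d → ℝ) → ℝ≥0∞) (hψ : Measurable ψ) (j : Fin d) :
    ∫⁻ x, (∫⁻ t, ψ (Function.update x j t) ∂(nu1 : Measure ℝ)) ∂(PiM d)
      = ∫⁻ x, ψ x ∂(PiM d) := by
  classical
  have h1 : (fun x => ∫⁻ t, ψ (Function.update x j t) ∂(nu1 : Measure ℝ))
      = MeasureTheory.lmarginal (fun _ : Fin d => nu1) {j} ψ := by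
    funext x
    rw [MeasureTheory.lmarginal_singleton]
  show ∫⁻ x, _ ∂(Measure.pi (fun _ : Fin d => nu1)) = ∫⁻ x, ψ x ∂(Measure.pi (fun _ : Fin d => nu1))
  simp only [h1]
  set G := MeasureTheory.lmarginal (fun _ : Fin d => nu1) {j} ψ with hG
  have hGm : Measurable G := hψ.lmarginal _
  rw [MeasureTheory.lintegral_eq_lmarginal_univ (f := G) (fun _ => (0:ℝ)),
    MeasureTheory.lintegral_eq_lmarginal_univ (f := ψ) (fun _ => (0:ℝ))]
  have step1 : MeasureTheory.lmarginal (fun _ : Fin d => nu1) Finset.univ G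
      = MeasureTheory.lmarginal (fun _ : Fin d => nu1) (Finset.univ.erase j) G := by
    have hinner : (fun x => ∫⁻ xᵢ : ℝ, G (Function.update x j xᵢ) ∂nu1) = G := by
      funext x
      have hupd : ∀ t : ℝ, G (Function.update x j t) = G x := fun t =>
        MeasureTheory.lmarginal_update_of_mem (μ := fun _ : Fin d => nu1)
          (Finset.mem_singleton_self j) ψ x t
      simp only [hupd, lintegral_const, measure_univ, mul_one]
    rw [MeasureTheory.lmarginal_erase' _ hGm (Finset.mem_univ j), hinner]
  have hdisj : Disjoint ({j} : Finset (Fin d)) (Finset.univ.erase j) :=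
    Finset.disjoint_singleton_left.mpr (Finset.notMem_erase j _)
  have step2 : MeasureTheory.lmarginal (fun _ : Fin d => nu1) (Finset.univ.erase j) G
      = MeasureTheory.lmarginal (fun _ : Fin d => nu1) Finset.univ ψ := by
    rw [hG, ← MeasureTheory.lmarginal_union' (fun _ : Fin d => nu1) ψ hψ hdisj]
    congr 1
    rw [show ({j} : Finset (Fin d)) ∪ Finset.univ.erase j = insert j (Finset.univ.erase j) by
      rw [Finset.insert_eq], Finset.insert_erase (Finset.mem_univ j)]
  rw [step1, step2]

/-! ### Mean-zero propagation -/

lemma avgF_continuous {g : E → ℝ} (hg : Continuous g) (j : Fin d) :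
    Continuous (avgF j g) := by
  exact intervalIntegral.continuous_parametric_intervalIntegral_of_continuous'
    (f := fun (x : E) (t : ℝ) => g (upd x j t))
    (by exact hg.comp (upd_smooth j).continuous) 0 1

lemma cube_closed : IsClosed (unitCube d) := by
  have h : unitCube d = ⋂ i, (fun x : E => x i) ⁻¹' Set.Icc (0:ℝ) 1 := by
    ext x
    simp [unitCube, Set.mem_iInter]
  rw [h]
  exact isClosed_iInter fun i =>
    IsClosed.preimage (EuclideanSpace.proj (𝕜 := ℝ) i).continuous isClosed_Icc

lemma cube_compact : IsCompact (unitCube d) := by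
  have hsub : unitCube d ⊆ Metric.closedBall 0 (Real.sqrt d) := by
    intro x hx
    rw [Metric.mem_closedBall, dist_zero_right]
    have h1 : ‖x‖ = Real.sqrt (∑ i, ‖x i‖ ^ 2) := by
      simpa using EuclideanSpace.norm_eq x
    rw [h1]
    apply Real.sqrt_le_sqrt
    calc ∑ i, ‖x i‖ ^ 2 ≤ ∑ _i : Fin d, (1:ℝ) := by
          apply Finset.sum_le_sum
          intro i _
          have := hx i
          have h2 : |x i| ≤ 1 := abs_le.mpr ⟨by linarith [this.1], this.2⟩
          calc ‖x i‖ ^ 2 = |x i| ^ 2 := by rw [Real.norm_eq_abs]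
            _ ≤ 1 ^ 2 := pow_le_pow_left₀ (abs_nonneg _) h2 2
            _ = 1 := one_pow 2
      _ = (d : ℝ) := by simp
  exact (isCompact_closedBall 0 (Real.sqrt d)).of_isClosed_subset cube_closed hsub

lemma cube_volume : (volume : Measure E) (unitCube d) = 1 := by
  have h := cube_transfer (d := d) (fun _ => (1:ℝ≥0∞)) measurable_const
  rwa [setLIntegral_one, lintegral_one, measure_univ] at h

lemma cube_measurable : MeasurableSet (unitCube d) :=
  cube_closed.measurableSet

lemma avgF_as_nu1 {g : E → ℝ} (j : Fin d) (x : E) :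
    avgF j g x = ∫ t, g (upd x j t) ∂(nu1 : Measure ℝ) := by
  rw [avgF, intervalIntegral.integral_of_le zero_le_one]
  rfl

lemma ofReal_avgF {g : E → ℝ} (hg : Continuous g) (hg0 : ∀ x, 0 ≤ g x) (j : Fin d) (x : E) :
    ENNReal.ofReal (avgF j g x)
      = ∫⁻ t, ENNReal.ofReal (g (upd x j t)) ∂(nu1 : Measure ℝ) := by
  have hcont : Continuous fun t => g (upd x j t) := hg.comp (continuous_upd_right x j)
  rw [avgF_as_nu1]
  apply MeasureTheory.ofReal_integral_eq_lintegral_ofReal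
  · have h1 : IntegrableOn (fun t => g (upd x j t)) (Set.Ioc (0:ℝ) 1) volume :=
      (hcont.integrableOn_Icc (a := (0:ℝ)) (b := 1)).mono_set Set.Ioc_subset_Icc_self
    exact h1
  · exact Filter.Eventually.of_forall fun t => hg0 _

lemma integral_avgF_nonneg {g : E → ℝ} (hg : Continuous g) (hg0 : ∀ x, 0 ≤ g x) (j : Fin d) :
    ∫ x in unitCube d, avgF j g x = ∫ x in unitCube d, g x := by
  have havgc : Continuous (avgF j g) := avgF_continuous hg j
  have havg0 : ∀ x, 0 ≤ avgF j g x := fun x =>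
    intervalIntegral.integral_nonneg zero_le_one fun t _ => hg0 _
  have hmeas1 : Measurable fun x : E => ENNReal.ofReal (avgF j g x) :=
    ENNReal.measurable_ofReal.comp havgc.measurable
  have hmeas2 : Measurable fun x : E => ENNReal.ofReal (g x) :=
    ENNReal.measurable_ofReal.comp hg.measurable
  have hL : ∫⁻ x in unitCube d, ENNReal.ofReal (avgF j g x)
      = ∫⁻ x in unitCube d, ENNReal.ofReal (g x) := by
    rw [cube_transfer _ hmeas1, cube_transfer _ hmeas2]
    have hkey : ∀ y : Fin d → ℝ,
        ENNReal.ofReal (avgF j g (((MeasurableEquiv.toLp 2 (Fin d → ℝ)).symm).symm y))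
        = ∫⁻ t, (fun z => ENNReal.ofReal (g (((MeasurableEquiv.toLp 2 (Fin d → ℝ)).symm).symm z)))
            (Function.update y j t) ∂(nu1 : Measure ℝ) := by
      intro y
      rw [ofReal_avgF hg hg0]
      rfl
    simp only [hkey]
    exact fubini_update _ (hmeas2.comp ((MeasurableEquiv.toLp 2 (Fin d → ℝ)).symm).symm.measurable) j
  rw [MeasureTheory.integral_eq_lintegral_of_nonneg_ae
      (Filter.Eventually.of_forall fun x => havg0 x) havgc.aestronglyMeasurable,
    MeasureTheory.integral_eq_lintegral_of_nonneg_ae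
      (Filter.Eventually.of_forall fun x => hg0 x) hg.aestronglyMeasurable,
    hL]

lemma integral_avgF {g : E → ℝ} (hg : Continuous g) (j : Fin d) :
    ∫ x in unitCube d, avgF j g x = ∫ x in unitCube d, g x := by
  set gp : E → ℝ := fun x => max (g x) 0 with hgp
  set gn : E → ℝ := fun x => max (-g x) 0 with hgn
  have hpc : Continuous gp := hg.max continuous_const
  have hnc : Continuous gn := hg.neg.max continuous_const
  have hp0 : ∀ x, 0 ≤ gp x := fun x => le_max_right _ _
  have hn0 : ∀ x, 0 ≤ gn x := fun x => le_max_right _ _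
  have hsplit : ∀ x, g x = gp x - gn x := by
    intro x
    simp only [hgp, hgn]
    rcases le_total (g x) 0 with h | h
    · rw [max_eq_right h, max_eq_left (by linarith)]
      ring
    · rw [max_eq_left h, max_eq_right (by linarith)]
      ring
  have havg : ∀ x, avgF j g x = avgF j gp x - avgF j gn x := by
    intro x
    have h1 : IntervalIntegrable (fun t => gp (upd x j t)) volume 0 1 :=
      (hpc.comp (continuous_upd_right x j)).intervalIntegrable 0 1
    have h2 : IntervalIntegrable (fun t => gn (upd x j t)) volume 0 1 :=
      (hnc.comp (continuous_upd_right x j)).intervalIntegrable 0 1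
    have : avgF j g x = ∫ t in (0:ℝ)..1, (gp (upd x j t) - gn (upd x j t)) := by
      apply intervalIntegral.integral_congr
      intro t _
      exact hsplit _
    rw [this, intervalIntegral.integral_sub h1 h2]
    rfl
  have hip : IntegrableOn (avgF j gp) (unitCube d) volume :=
    (avgF_continuous hpc j).continuousOn.integrableOn_compact cube_compact
  have hin : IntegrableOn (avgF j gn) (unitCube d) volume :=
    (avgF_continuous hnc j).continuousOn.integrableOn_compact cube_compact
  have hip' : IntegrableOn gp (unitCube d) volume :=
    hpc.continuousOn.integrableOn_compact cube_compact
  have hin' : IntegrableOn gn (unitCube d) volume :=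
    hnc.continuousOn.integrableOn_compact cube_compact
  calc ∫ x in unitCube d, avgF j g x
      = ∫ x in unitCube d, (avgF j gp x - avgF j gn x) := by
        apply setIntegral_congr_fun cube_measurable
        intro x _
        exact havg x
    _ = (∫ x in unitCube d, avgF j gp x) - ∫ x in unitCube d, avgF j gn x :=
        integral_sub hip hin
    _ = (∫ x in unitCube d, gp x) - ∫ x in unitCube d, gn x := by
        rw [integral_avgF_nonneg hpc hp0, integral_avgF_nonneg hnc hn0]
    _ = ∫ x in unitCube d, (gp x - gn x) := (integral_sub hip' hin').symm
    _ = ∫ x in unitCube d, g x := by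
        apply setIntegral_congr_fun cube_measurable
        intro x _
        exact (hsplit x).symm

lemma AIt_aux (f : E → ℝ) : ∀ k, k ≤ d → ∀ x y : E,
    (∀ i : Fin d, k ≤ (i : ℕ) → x i = y i) → AIt f k x = AIt f k y := by
  intro k
  induction k with
  | zero =>
    intro _ x y h
    have : x = y := PiLp.ext fun i => h i (Nat.zero_le _)
    rw [this]
  | succ k ih =>
    intro hk x y h
    have hkd : k < d := hk
    simp only [AIt, dif_pos hkd, avgF]
    apply intervalIntegral.integral_congr
    intro t _
    apply ih (le_of_lt hkd) _ _
    intro i hi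
    rw [upd_apply, upd_apply]
    by_cases hij : i = ⟨k, hkd⟩
    · simp [hij]
    · have : k + 1 ≤ (i : ℕ) := by
        rcases Nat.lt_or_ge (i : ℕ) (k+1) with h' | h'
        · exfalso
          apply hij
          apply Fin.ext
          show (i : ℕ) = k
          omega
        · exact h'
      simp only [if_neg hij]
      exact h i this

lemma AIt_const {f : E → ℝ} (x y : E) : AIt f d x = AIt f d y :=
  AIt_aux f d le_rfl x y (fun i hi => absurd hi (not_le.mpr i.isLt))

lemma AIt_d_eq_zero {f : E → ℝ} (hf : ContDiff ℝ (⊤ : ℕ∞) f)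
    (hmean : (∫ x in unitCube d, f x) = 0) : ∀ x, AIt f d x = 0 := by
  have hint : ∀ k, k ≤ d → ∫ x in unitCube d, AIt f k x = ∫ x in unitCube d, f x := by
    intro k
    induction k with
    | zero => intro _; rfl
    | succ k ih =>
      intro hk
      have hkd : k < d := hk
      have h1 : ∫ x in unitCube d, AIt f (k+1) x
          = ∫ x in unitCube d, avgF ⟨k, hkd⟩ (AIt f k) x := by
        simp only [AIt, dif_pos hkd]
      rw [h1, integral_avgF (AIt_contDiff hf k).continuous]
      exact ih (le_of_lt hkd)
  intro x
  have h1 : ∫ z in unitCube d, AIt f d z = 0 := by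
    rw [hint d le_rfl, hmean]
  have h2 : (fun z : E => AIt f d z) = fun _ => AIt f d x :=
    funext fun z => AIt_const z x
  rw [h2, setIntegral_const, measureReal_def, cube_volume] at h1
  simpa using h1

/-! ### Norm inequalities -/

lemma jensen_pow {μ : Measure ℝ} [IsProbabilityMeasure μ] {φ : ℝ → ℝ≥0∞}
    (hφ : AEMeasurable φ μ) {p : ℝ} (hp : 1 ≤ p) :
    (∫⁻ t, φ t ∂μ) ^ p ≤ ∫⁻ t, (φ t) ^ p ∂μ := by
  rcases eq_or_lt_of_le hp with heq | hlt
  · rw [← heq]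
    simp
  · have hcj : p.HolderConjugate p.conjExponent := Real.HolderConjugate.conjExponent hlt
    have h := ENNReal.lintegral_mul_le_Lp_mul_Lq μ hcj (g := fun _ => (1:ℝ≥0∞)) hφ
      aemeasurable_const
    simp only [Pi.mul_apply, Pi.one_apply, mul_one, ENNReal.one_rpow, lintegral_const,
      measure_univ] at h
    have hp0 : (0:ℝ) < p := lt_trans one_pos hlt
    calc (∫⁻ t, φ t ∂μ) ^ p ≤ ((∫⁻ t, (φ t) ^ p ∂μ) ^ (1/p)) ^ p := by
          apply ENNReal.rpow_le_rpow _ hp0.le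
          simpa using h
      _ = ∫⁻ t, (φ t) ^ p ∂μ := by
          rw [← ENNReal.rpow_mul, one_div, inv_mul_cancel₀ hp0.ne', ENNReal.rpow_one]

lemma coord_abs_le_norm (z : E) (i : Fin d) : |z i| ≤ ‖z‖ := by
  have h1 : ‖z‖ = Real.sqrt (∑ k, ‖z k‖ ^ 2) := by simpa using EuclideanSpace.norm_eq z
  rw [h1]
  have h2 : |z i| ^ 2 ≤ ∑ k, ‖z k‖ ^ 2 := by
    have := Finset.single_le_sum (f := fun k => ‖z k‖ ^ 2)
      (fun k _ => sq_nonneg _) (Finset.mem_univ i)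
    simpa [Real.norm_eq_abs] using this
  calc |z i| = Real.sqrt (|z i| ^ 2) := by rw [Real.sqrt_sq_eq_abs, abs_abs]
    _ ≤ Real.sqrt (∑ k, ‖z k‖ ^ 2) := Real.sqrt_le_sqrt h2

lemma sub_apply' (x y : E) (i : Fin d) : (x - y) i = x i - y i := rfl

lemma cube_pos_around {x₀ : E} (hx₀ : x₀ ∈ unitCube d) {U : Set E} (hU : IsOpen U)
    (hx₀U : x₀ ∈ U) : 0 < (volume.restrict (unitCube d)) U := by
  obtain ⟨δ, hδ0, hball⟩ := Metric.isOpen_iff.mp hU x₀ hx₀U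
  set c : E := (EuclideanSpace.equiv (Fin d) ℝ).symm (fun _ => (1/2 : ℝ)) with hc
  have hcapp : ∀ i, c i = 1/2 := fun i => rfl
  set N : ℝ := ‖c - x₀‖ with hN
  have hN0 : 0 ≤ N := norm_nonneg _
  set ε : ℝ := min (1/2) (δ / (2 * (N + 1))) with hε
  have hε0 : 0 < ε := lt_min (by norm_num) (by positivity)
  have hε1 : ε ≤ 1/2 := min_le_left _ _
  set y : E := x₀ + ε • (c - x₀) with hy
  have hyi : ∀ i, y i = (1 - ε) * x₀ i + ε * (1/2) := by
    intro i
    have : y i = x₀ i + ε * (c i - x₀ i) := rfl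
    rw [this, hcapp]
    ring
  have hybounds : ∀ i, ε/2 ≤ y i ∧ y i ≤ 1 - ε/2 := by
    intro i
    obtain ⟨h0, h1⟩ := hx₀ i
    rw [hyi i]
    constructor <;> nlinarith
  have hyx : ‖y - x₀‖ < δ := by
    have h1 : y - x₀ = ε • (c - x₀) := by rw [hy]; abel
    rw [h1, norm_smul, Real.norm_of_nonneg hε0.le]
    have h2 : ε ≤ δ / (2 * (N + 1)) := min_le_right _ _
    have h3 : ε * N ≤ (δ / (2 * (N + 1))) * N := by
      apply mul_le_mul_of_nonneg_right h2 hN0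
    have h4 : (δ / (2 * (N + 1))) * N < δ := by
      rw [div_mul_eq_mul_div, div_lt_iff₀ (by positivity)]
      nlinarith
    exact lt_of_le_of_lt h3 h4
  set rr : ℝ := min (ε/2) (δ - ‖y - x₀‖) with hrr
  have hrr0 : 0 < rr := lt_min (by positivity) (by linarith)
  have hsub : Metric.ball y rr ⊆ U ∩ unitCube d := by
    intro z hz
    rw [Metric.mem_ball, dist_eq_norm] at hz
    constructor
    · apply hball
      rw [Metric.mem_ball, dist_eq_norm]
      calc ‖z - x₀‖ ≤ ‖z - y‖ + ‖y - x₀‖ := by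
            have : z - x₀ = (z - y) + (y - x₀) := by abel
            rw [this]; exact norm_add_le _ _
        _ < rr + ‖y - x₀‖ := by linarith
        _ ≤ δ := by
            have := min_le_right (ε/2) (δ - ‖y - x₀‖)
            rw [← hrr] at this
            linarith
    · intro i
      have h1 : |z i - y i| ≤ ‖z - y‖ := by
        have := coord_abs_le_norm (z - y) i
        rwa [sub_apply'] at this
      have h2 : ‖z - y‖ < ε/2 := lt_of_lt_of_le hz (min_le_left _ _)
      obtain ⟨hb1, hb2⟩ := hybounds i
      have h3 := abs_lt.mp (lt_of_le_of_lt h1 h2)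
      constructor <;> [linarith [h3.1]; linarith [h3.2]]
  have hpos : 0 < volume (Metric.ball y rr) := Metric.measure_ball_pos volume y hrr0
  rw [Measure.restrict_apply hU.measurableSet]
  calc 0 < volume (Metric.ball y rr) := hpos
    _ ≤ volume (U ∩ unitCube d) := measure_mono hsub

lemma ess_bound {g : E → ℝ} (hg : Continuous g) {x₀ : E} (hx₀ : x₀ ∈ unitCube d) :
    (‖g x₀‖₊ : ℝ≥0∞) ≤ eLpNormEssSup g (volume.restrict (unitCube d)) := by
  by_contra hlt
  push_neg at hlt
  set M := eLpNormEssSup g (volume.restrict (unitCube d)) with hM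
  have hU : IsOpen {x : E | M < (‖g x‖₊ : ℝ≥0∞)} :=
    isOpen_lt continuous_const (ENNReal.continuous_coe.comp hg.nnnorm)
  have hpos := cube_pos_around hx₀ hU hlt
  have hnull : (volume.restrict (unitCube d)) {x : E | M < (‖g x‖₊ : ℝ≥0∞)} = 0 := by
    have hae : ∀ᵐ x ∂(volume.restrict (unitCube d)), (‖g x‖₊ : ℝ≥0∞) ≤ M :=
      ENNReal.ae_le_essSup (μ := volume.restrict (unitCube d))
      (fun x => (‖g x‖₊ : ℝ≥0∞))
    rw [ae_iff] at hae
    simpa [not_le] using hae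
  rw [hnull] at hpos
  exact lt_irrefl 0 hpos

lemma contraction_abs {g : E → ℝ} (hg : Continuous g) (j : Fin d) {r : ℝ≥0∞} (hr : 1 ≤ r) :
    eLpNorm (fun x => ∫ t in (0:ℝ)..1, |g (upd x j t)|) r (volume.restrict (unitCube d))
      ≤ eLpNorm g r (volume.restrict (unitCube d)) := by
  by_cases hrt : r = ⊤
  · subst hrt
    by_cases hM : eLpNormEssSup g (volume.restrict (unitCube d)) = ⊤
    · rw [eLpNorm_exponent_top (f := g), hM]
      exact le_top
    · set M := eLpNormEssSup g (volume.restrict (unitCube d)) with hMdef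
      have hb : ∀ x ∈ unitCube d,
          ‖∫ t in (0:ℝ)..1, |g (upd x j t)|‖ ≤ M.toReal := by
        intro x hx
        have h0 : 0 ≤ ∫ t in (0:ℝ)..1, |g (upd x j t)| :=
          intervalIntegral.integral_nonneg zero_le_one fun t _ => abs_nonneg _
        rw [Real.norm_of_nonneg h0]
        have hint : IntervalIntegrable (fun t => |g (upd x j t)|) volume 0 1 :=
          ((hg.comp (continuous_upd_right x j)).abs).intervalIntegrable 0 1
        have hb1 : ∀ t ∈ Set.Icc (0:ℝ) 1, |g (upd x j t)| ≤ M.toReal := by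
          intro t ht
          have h1 := ess_bound hg (upd_mem_cube (j := j) hx ht)
          have h2 := ENNReal.toReal_mono hM h1
          simpa [Real.norm_eq_abs] using h2
        calc ∫ t in (0:ℝ)..1, |g (upd x j t)|
            ≤ ∫ _t in (0:ℝ)..1, M.toReal :=
              intervalIntegral.integral_mono_on zero_le_one hint
                intervalIntegrable_const hb1
          _ = M.toReal := by simp
      have hae : ∀ᵐ x ∂(volume.restrict (unitCube d)),
          ‖∫ t in (0:ℝ)..1, |g (upd x j t)|‖ ≤ M.toReal :=
        ae_restrict_of_forall_mem cube_measurable hb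
      have h2 := eLpNorm_le_of_ae_bound (p := (⊤:ℝ≥0∞)) hae
      have h3 : ((volume.restrict (unitCube d)) Set.univ) ^ ((⊤:ℝ≥0∞).toReal)⁻¹
          * ENNReal.ofReal M.toReal = M := by
        rw [ENNReal.toReal_top, inv_zero, ENNReal.rpow_zero, one_mul,
          ENNReal.ofReal_toReal hM]
      rw [h3] at h2
      rw [eLpNorm_exponent_top (f := g)]
      exact h2
  · have hr0 : r ≠ 0 := fun h => by simp [h] at hr
    set p := r.toReal with hp
    have hp1 : 1 ≤ p := by
      have := ENNReal.toReal_mono hrt hr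
      simpa using this
    have hp0 : (0:ℝ) < p := lt_of_lt_of_le one_pos hp1
    rw [eLpNorm_eq_lintegral_rpow_enorm_toReal hr0 hrt, eLpNorm_eq_lintegral_rpow_enorm_toReal hr0 hrt]
    apply ENNReal.rpow_le_rpow _ (by positivity)
    have hpt : ∀ x : E, ((‖∫ t in (0:ℝ)..1, |g (upd x j t)|‖₊ : ℝ≥0∞)) ^ p
        ≤ ∫⁻ t, ((‖g (upd x j t)‖₊ : ℝ≥0∞)) ^ p ∂(nu1 : Measure ℝ) := by
      intro x
      have h0 : 0 ≤ ∫ t in (0:ℝ)..1, |g (upd x j t)| :=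
        intervalIntegral.integral_nonneg zero_le_one fun t _ => abs_nonneg _
      have e1 : ((‖∫ t in (0:ℝ)..1, |g (upd x j t)|‖₊ : ℝ≥0∞))
          = ∫⁻ t, (‖g (upd x j t)‖₊ : ℝ≥0∞) ∂(nu1 : Measure ℝ) := by
        rw [← enorm_eq_nnnorm, Real.enorm_eq_ofReal h0]
        rw [show (∫ t in (0:ℝ)..1, |g (upd x j t)|)
          = avgF j (fun y => |g y|) x from rfl]
        rw [ofReal_avgF (g := fun y => |g y|) hg.abs (fun y => abs_nonneg _) j x]
        congr 1
        funext t
        rw [← Real.norm_eq_abs, ofReal_norm, enorm_eq_nnnorm]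
      rw [e1]
      exact jensen_pow
        (((ENNReal.continuous_coe.comp
          ((hg.comp (continuous_upd_right x j)).nnnorm)).measurable).aemeasurable) hp1
    calc ∫⁻ x, ((‖∫ t in (0:ℝ)..1, |g (upd x j t)|‖₊ : ℝ≥0∞)) ^ p
          ∂(volume.restrict (unitCube d))
        ≤ ∫⁻ x, (∫⁻ t, ((‖g (upd x j t)‖₊ : ℝ≥0∞)) ^ p ∂(nu1 : Measure ℝ))
          ∂(volume.restrict (unitCube d)) := lintegral_mono hpt
      _ = ∫⁻ x, ((‖g x‖₊ : ℝ≥0∞)) ^ p ∂(volume.restrict (unitCube d)) := by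
        have hm2 : Measurable fun x : E => ((‖g x‖₊ : ℝ≥0∞)) ^ p :=
          (ENNReal.continuous_rpow_const.comp
            (ENNReal.continuous_coe.comp hg.nnnorm)).measurable
        have hm1 : Measurable fun x : E =>
            ∫⁻ t, ((‖g (upd x j t)‖₊ : ℝ≥0∞)) ^ p ∂(nu1 : Measure ℝ) := by
          apply Measurable.lintegral_prod_right
          exact (ENNReal.continuous_rpow_const.comp (ENNReal.continuous_coe.comp
            (hg.comp (upd_smooth j).continuous).nnnorm)).measurable
        rw [cube_transfer _ hm1, cube_transfer _ hm2]
        exact fubini_update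
          (fun z => ((‖g (((MeasurableEquiv.toLp 2 (Fin d → ℝ)).symm).symm z)‖₊ : ℝ≥0∞)) ^ p)
          (hm2.comp (MeasurableEquiv.measurable _)) j

lemma contraction_avgF {g : E → ℝ} (hg : Continuous g) (j : Fin d) {r : ℝ≥0∞} (hr : 1 ≤ r) :
    eLpNorm (avgF j g) r (volume.restrict (unitCube d))
      ≤ eLpNorm g r (volume.restrict (unitCube d)) := by
  refine le_trans (eLpNorm_mono_real (g := fun x => ∫ t in (0:ℝ)..1, |g (upd x j t)|) ?_)
    (contraction_abs hg j hr)
  intro x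
  have h1 : ‖avgF j g x‖ ≤ ∫ t in (0:ℝ)..1, |g (upd x j t)| := by
    simpa [Real.norm_eq_abs, avgF] using
      intervalIntegral.norm_integral_le_integral_norm (f := fun t => g (upd x j t))
        (a := (0:ℝ)) (b := 1) zero_le_one
  exact h1

lemma AIt_eLpNorm_le {f : E → ℝ} (hf : ContDiff ℝ (⊤ : ℕ∞) f) (k : ℕ) {r : ℝ≥0∞} (hr : 1 ≤ r) :
    eLpNorm (AIt f k) r (volume.restrict (unitCube d))
      ≤ eLpNorm f r (volume.restrict (unitCube d)) := by
  induction k with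
  | zero => exact le_rfl
  | succ k ih =>
    by_cases h : k < d
    · simp only [AIt, dif_pos h]
      exact le_trans (contraction_avgF ((AIt_contDiff hf k).continuous) _ hr) ih
    · simpa [AIt, dif_neg h] using ih

/-! ### Linearity -/

lemma avgF_add {g h : E → ℝ} (hg : Continuous g) (hh : Continuous h) (j : Fin d) :
    avgF j (g + h) = avgF j g + avgF j h := by
  funext x
  have h1 : IntervalIntegrable (fun t => g (upd x j t)) volume 0 1 :=
    (hg.comp (continuous_upd_right x j)).intervalIntegrable 0 1
  have h2 : IntervalIntegrable (fun t => h (upd x j t)) volume 0 1 :=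
    (hh.comp (continuous_upd_right x j)).intervalIntegrable 0 1
  simp only [avgF, Pi.add_apply]
  rw [← intervalIntegral.integral_add h1 h2]

lemma avgF_smul (c : ℝ) {g : E → ℝ} (j : Fin d) :
    avgF j (c • g) = c • avgF j g := by
  funext x
  simp only [avgF, Pi.smul_apply, smul_eq_mul]
  simp only [intervalIntegral.integral_const_mul]

lemma AIt_add {g h : E → ℝ} (hg : ContDiff ℝ (⊤ : ℕ∞) g) (hh : ContDiff ℝ (⊤ : ℕ∞) h) (k : ℕ) :
    AIt (g + h) k = AIt g k + AIt h k := by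
  induction k with
  | zero => rfl
  | succ k ih =>
    by_cases hk : k < d
    · simp only [AIt, dif_pos hk, ih]
      exact avgF_add (AIt_contDiff hg k).continuous (AIt_contDiff hh k).continuous _
    · simpa [AIt, dif_neg hk] using ih

lemma AIt_smul (c : ℝ) (g : E → ℝ) (k : ℕ) :
    AIt (c • g) k = c • AIt g k := by
  induction k with
  | zero => rfl
  | succ k ih =>
    by_cases hk : k < d
    · simp only [AIt, dif_pos hk, ih]
      exact avgF_smul c _
    · simpa [AIt, dif_neg hk] using ih

lemma primF_add {g h : E → ℝ} (hg : Continuous g) (hh : Continuous h) (j : Fin d) (x : E) :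
    primF j (g + h) x = primF j g x + primF j h x := by
  have c1 : Continuous (fun u : ℝ => upd x j ((x j) * u)) :=
    (continuous_upd_right x j).comp (continuous_const.mul continuous_id)
  have h1 : IntervalIntegrable (fun u => (x j) • g (upd x j ((x j) * u))) volume 0 1 :=
    ((hg.comp c1).const_smul (x j)).intervalIntegrable 0 1
  have h2 : IntervalIntegrable (fun u => (x j) • h (upd x j ((x j) * u))) volume 0 1 :=
    ((hh.comp c1).const_smul (x j)).intervalIntegrable 0 1
  simp only [primF, Pi.add_apply, smul_add]
  exact intervalIntegral.integral_add h1 h2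

lemma primF_smul (c : ℝ) (g : E → ℝ) (j : Fin d) (x : E) :
    primF j (c • g) x = c * primF j g x := by
  simp only [primF, Pi.smul_apply, smul_eq_mul]
  rw [← intervalIntegral.integral_const_mul]
  congr 1; funext u; ring

lemma Phi_add {g h : E → ℝ} (hg : ContDiff ℝ (⊤ : ℕ∞) g) (hh : ContDiff ℝ (⊤ : ℕ∞) h) :
    Phi (g + h) = Phi g + Phi h := by
  funext x
  show _ = Phi g x + Phi h x
  ext j
  show primF j (hpiece (g + h) j) x = primF j (hpiece g j) x + primF j (hpiece h j) x
  have h1 : hpiece (g + h) j = hpiece g j + hpiece h j := by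
    funext y
    simp only [hpiece, AIt_add hg hh, Pi.add_apply]
    ring
  rw [h1, primF_add (hpiece_contDiff hg j).continuous (hpiece_contDiff hh j).continuous]

lemma Phi_smul (c : ℝ) {g : E → ℝ} (hg : ContDiff ℝ (⊤ : ℕ∞) g) :
    Phi (c • g) = c • Phi g := by
  funext x
  show _ = c • Phi g x
  ext j
  show primF j (hpiece (c • g) j) x = c * primF j (hpiece g j) x
  have h1 : hpiece (c • g) j = c • hpiece g j := by
    funext y
    simp only [hpiece, AIt_smul, Pi.smul_apply, smul_eq_mul]
    ring
  rw [h1, primF_smul]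

/-! ### Main structural properties of Phi -/

lemma Phi_contDiff {f : E → ℝ} (hf : ContDiff ℝ (⊤ : ℕ∞) f) :
    ContDiff ℝ (⊤ : ℕ∞) (Phi (d := d) f) := by
  have : Phi (d := d) f = (EuclideanSpace.equiv (Fin d) ℝ).symm ∘
      (fun x => fun j => primF j (hpiece f j) x) := rfl
  rw [this, ContinuousLinearEquiv.comp_contDiff_iff]
  rw [contDiff_pi]
  intro j
  exact primF_contDiff (hpiece_contDiff hf j) j

lemma Phi_periodic {f : E → ℝ} (hf : ContDiff ℝ (⊤ : ℕ∞) f) (hper : ZdPeriodic f) :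
    ZdPeriodic (Phi (d := d) f) := by
  intro x m
  ext j
  show primF j (hpiece f j) (x + tr m) = primF j (hpiece f j) x
  exact primF_hpiece_periodic hf hper j x m

lemma Phi_div {f : E → ℝ} (hf : ContDiff ℝ (⊤ : ℕ∞) f)
    (hA : ∀ x, AIt f d x = 0) : ∀ x, diverg (Phi (d := d) f) x = f x := by
  intro x
  have hv : ContDiff ℝ (⊤ : ℕ∞) (Phi (d := d) f) := Phi_contDiff hf
  have hvd : Differentiable ℝ (Phi (d := d) f) :=
    hv.differentiable (by simp)
  have hcoord : ∀ j : Fin d,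
      (fderiv ℝ (Phi (d := d) f) x (EuclideanSpace.single j 1)) j = hpiece f j x := by
    intro j
    have h1 : HasFDerivAt (Phi (d := d) f) (fderiv ℝ (Phi (d := d) f) x) x :=
      (hvd x).hasFDerivAt
    have h2 : HasFDerivAt (fun y => Phi (d := d) f y j)
        ((EuclideanSpace.proj (𝕜 := ℝ) j).comp (fderiv ℝ (Phi (d := d) f) x)) x :=
      (EuclideanSpace.proj (𝕜 := ℝ) j).hasFDerivAt.comp x h1
    have h3 : (fun y => Phi (d := d) f y j) = primF j (hpiece f j) := rfl
    rw [h3] at h2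
    have h5 := primF_deriv (hpiece_contDiff hf j).continuous j x h2.differentiableAt
    rw [h2.fderiv] at h5
    exact h5
  show (∑ j, fderiv ℝ (Phi (d := d) f) x (EuclideanSpace.single j 1) j) = f x
  rw [Finset.sum_congr rfl fun j _ => hcoord j]
  have h6 : (∑ j : Fin d, hpiece f j x)
      = ∑ k ∈ Finset.range d, (AIt f k x - AIt f (k+1) x) :=
    Fin.sum_univ_eq_sum_range (fun k => AIt f k x - AIt f (k+1) x) d
  rw [h6, Finset.sum_range_sub' (fun k => AIt f k x) d, hA x]
  show f x - 0 = f x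
  ring

lemma norm_le_sum_abs (y : E) : ‖y‖ ≤ ∑ j, |y j| := by
  have h1 : ‖y‖ = Real.sqrt (∑ k, ‖y k‖ ^ 2) := by simpa using EuclideanSpace.norm_eq y
  rw [h1]
  have h2 : (∑ k, ‖y k‖ ^ 2) ≤ (∑ k, |y k|) ^ 2 := by
    have := Finset.sum_sq_le_sq_sum_of_nonneg
      (f := fun k : Fin d => |y k|) (s := Finset.univ) (fun k _ => abs_nonneg _)
    simpa [Real.norm_eq_abs] using this
  calc Real.sqrt (∑ k, ‖y k‖ ^ 2) ≤ Real.sqrt ((∑ k, |y k|) ^ 2) := Real.sqrt_le_sqrt h2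
    _ = |(∑ k, |y k|)| := Real.sqrt_sq_eq_abs _
    _ = ∑ k, |y k| := abs_of_nonneg (Finset.sum_nonneg fun k _ => abs_nonneg _)

lemma Phi_eLpNorm {f : E → ℝ} (hf : ContDiff ℝ (⊤ : ℕ∞) f) {r : ℝ≥0∞} (hr : 1 ≤ r) :
    eLpNorm (Phi (d := d) f) r (volume.restrict (unitCube d))
      ≤ (2 * d : ℝ≥0∞) * eLpNorm f r (volume.restrict (unitCube d)) := by
  set W : Fin d → E → ℝ := fun j x => avgF j (fun y => |hpiece f j y|) x with hW
  have hWc : ∀ j, Continuous (W j) := fun j =>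
    avgF_continuous ((hpiece_contDiff hf j).continuous.abs) j
  have hW0 : ∀ j x, 0 ≤ W j x := fun j x =>
    intervalIntegral.integral_nonneg zero_le_one fun t _ => abs_nonneg _
  -- pointwise bound on the cube
  have hpt : ∀ x ∈ unitCube d, ‖Phi (d := d) f x‖ ≤ ∑ j, W j x := by
    intro x hx
    have hcomp : ∀ j : Fin d, |Phi (d := d) f x j| ≤ W j x := by
      intro j
      have hxj0 : 0 ≤ x j := (hx j).1
      have hxj1 : x j ≤ 1 := (hx j).2
      have hcont : Continuous fun t => |hpiece f j (upd x j t)| :=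
        ((hpiece_contDiff hf j).continuous.comp (continuous_upd_right x j)).abs
      have heq : Phi (d := d) f x j = ∫ t in (0:ℝ)..(x j), hpiece f j (upd x j t) := by
        show primF j (hpiece f j) x = _
        exact primF_eq (hpiece_contDiff hf j).continuous j x
      rw [heq]
      calc |∫ t in (0:ℝ)..(x j), hpiece f j (upd x j t)|
          ≤ ∫ t in (0:ℝ)..(x j), |hpiece f j (upd x j t)| := by
            simpa [Real.norm_eq_abs] using
              intervalIntegral.norm_integral_le_integral_norm
                (f := fun t => hpiece f j (upd x j t)) (a := (0:ℝ)) (b := x j) hxj0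
        _ ≤ ∫ t in (0:ℝ)..1, |hpiece f j (upd x j t)| := by
            rw [← intervalIntegral.integral_add_adjacent_intervals
              (hcont.intervalIntegrable 0 (x j)) (hcont.intervalIntegrable (x j) 1)]
            have : 0 ≤ ∫ t in (x j)..1, |hpiece f j (upd x j t)| :=
              intervalIntegral.integral_nonneg hxj1 fun t _ => abs_nonneg _
            linarith
        _ = W j x := rfl
    calc ‖Phi (d := d) f x‖ ≤ ∑ j, |Phi (d := d) f x j| := norm_le_sum_abs _
      _ ≤ ∑ j, W j x := Finset.sum_le_sum fun j _ => hcomp j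
  have hstep1 : eLpNorm (Phi (d := d) f) r (volume.restrict (unitCube d))
      ≤ eLpNorm (fun x => ∑ j, W j x) r (volume.restrict (unitCube d)) := by
    apply eLpNorm_mono_ae
    apply ae_restrict_of_forall_mem cube_measurable
    intro x hx
    have h1 : ‖∑ j, W j x‖ = ∑ j, W j x :=
      Real.norm_of_nonneg (Finset.sum_nonneg fun j _ => hW0 j x)
    rw [h1]
    exact hpt x hx
  have hsum_eq : (fun x => ∑ j, W j x) = ∑ j, W j := by
    funext x
    simp [Finset.sum_apply]
  have hstep2 : eLpNorm (fun x => ∑ j, W j x) r (volume.restrict (unitCube d))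
      ≤ ∑ j, eLpNorm (W j) r (volume.restrict (unitCube d)) := by
    rw [hsum_eq]
    exact eLpNorm_sum_le (fun j _ => (hWc j).aestronglyMeasurable) hr
  have hstep3 : ∀ j : Fin d, eLpNorm (W j) r (volume.restrict (unitCube d))
      ≤ 2 * eLpNorm f r (volume.restrict (unitCube d)) := by
    intro j
    have h1 : eLpNorm (W j) r (volume.restrict (unitCube d))
        ≤ eLpNorm (hpiece f j) r (volume.restrict (unitCube d)) :=
      contraction_abs (hpiece_contDiff hf j).continuous j hr
    have h2 : eLpNorm (hpiece f j) r (volume.restrict (unitCube d))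
        ≤ eLpNorm (AIt f j.val) r (volume.restrict (unitCube d))
          + eLpNorm (AIt f (j.val+1)) r (volume.restrict (unitCube d)) := by
      have := eLpNorm_sub_le (μ := volume.restrict (unitCube d))
        ((AIt_contDiff hf j.val).continuous.aestronglyMeasurable)
        ((AIt_contDiff hf (j.val+1)).continuous.aestronglyMeasurable) hr
      exact this
    have h3 := AIt_eLpNorm_le hf j.val hr
    have h4 := AIt_eLpNorm_le hf (j.val+1) hr
    calc eLpNorm (W j) r (volume.restrict (unitCube d))
        ≤ eLpNorm (AIt f j.val) r (volume.restrict (unitCube d))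
          + eLpNorm (AIt f (j.val+1)) r (volume.restrict (unitCube d)) :=
          le_trans h1 h2
      _ ≤ eLpNorm f r (volume.restrict (unitCube d))
          + eLpNorm f r (volume.restrict (unitCube d)) := add_le_add h3 h4
      _ = 2 * eLpNorm f r (volume.restrict (unitCube d)) := (two_mul _).symm
  calc eLpNorm (Phi (d := d) f) r (volume.restrict (unitCube d))
      ≤ ∑ j : Fin d, eLpNorm (W j) r (volume.restrict (unitCube d)) :=
        le_trans hstep1 hstep2
    _ ≤ ∑ _j : Fin d, 2 * eLpNorm f r (volume.restrict (unitCube d)) :=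
        Finset.sum_le_sum fun j _ => hstep3 j
    _ = (d : ℝ≥0∞) * (2 * eLpNorm f r (volume.restrict (unitCube d))) := by
        rw [Finset.sum_const, Finset.card_univ, Fintype.card_fin, nsmul_eq_mul]
    _ = (2 * d : ℝ≥0∞) * eLpNorm f r (volume.restrict (unitCube d)) := by
        ring

end Antidiv

open Antidiv in
/-- Existence of the standard antidivergence operator: a linear map `T` sending each smooth
`ℤ^d`-periodic mean-zero function `f` to a smooth `ℤ^d`-periodic vector field with
`div (T f) = f` and, for every `r ∈ [1,∞]`, `‖T f‖_{L^r([0,1]^d)} ≤ C_r ‖f‖_{L^r([0,1]^d)}`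
with `C_r` depending only on `r` and `d`. -/
theorem antidivergence_exists (d : ℕ) (hd : 1 ≤ d) :
    ∃ T : (EuclideanSpace ℝ (Fin d) → ℝ)
        →ₗ[ℝ] (EuclideanSpace ℝ (Fin d) → EuclideanSpace ℝ (Fin d)),
      (∀ f : EuclideanSpace ℝ (Fin d) → ℝ,
        ContDiff ℝ (⊤ : ℕ∞) f → ZdPeriodic f → (∫ x in unitCube d, f x) = 0 →
          ContDiff ℝ (⊤ : ℕ∞) (T f) ∧ ZdPeriodic (T f) ∧ ∀ x, diverg (T f) x = f x) ∧
      (∀ r : ℝ≥0∞, 1 ≤ r → ∃ C : ℝ≥0∞, C ≠ ⊤ ∧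
        ∀ f : EuclideanSpace ℝ (Fin d) → ℝ,
          ContDiff ℝ (⊤ : ℕ∞) f → ZdPeriodic f → (∫ x in unitCube d, f x) = 0 →
            eLpNorm (T f) r (volume.restrict (unitCube d))
              ≤ C * eLpNorm f r (volume.restrict (unitCube d))) := by
  classical
  -- the subspace of good functions
  set S : Submodule ℝ (EuclideanSpace ℝ (Fin d) → ℝ) :=
    { carrier := {f | ContDiff ℝ (⊤ : ℕ∞) f ∧ ZdPeriodic f ∧ (∫ x in unitCube d, f x) = 0}
      add_mem' := by
        rintro f g ⟨hf1, hf2, hf3⟩ ⟨hg1, hg2, hg3⟩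
        refine ⟨hf1.add hg1, fun x m => ?_, ?_⟩
        · show f _ + g _ = f x + g x
          rw [hf2 x m, hg2 x m]
        · have hfi : IntegrableOn f (unitCube d) volume :=
            hf1.continuous.continuousOn.integrableOn_compact cube_compact
          have hgi : IntegrableOn g (unitCube d) volume :=
            hg1.continuous.continuousOn.integrableOn_compact cube_compact
          show (∫ x in unitCube d, (f x + g x)) = 0
          rw [integral_add hfi hgi, hf3, hg3, add_zero]
      zero_mem' := by
        refine ⟨contDiff_const, fun x m => rfl, by simp⟩
      smul_mem' := by
        rintro c f ⟨hf1, hf2, hf3⟩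
        refine ⟨hf1.const_smul c, fun x m => ?_, ?_⟩
        · show c • f _ = c • f x
          rw [hf2 x m]
        · show (∫ x in unitCube d, c * f x) = 0
          rw [integral_const_mul, hf3, mul_zero] }
  have memS : ∀ f, f ∈ S ↔
      ContDiff ℝ (⊤ : ℕ∞) f ∧ ZdPeriodic f ∧ (∫ x in unitCube d, f x) = 0 := fun f => Iff.rfl
  -- linear map on S
  set T₀ : S →ₗ[ℝ] (EuclideanSpace ℝ (Fin d) → EuclideanSpace ℝ (Fin d)) :=
    { toFun := fun f => Phi (f : EuclideanSpace ℝ (Fin d) → ℝ)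
      map_add' := by
        rintro ⟨f, hf⟩ ⟨g, hg⟩
        exact Phi_add hf.1 hg.1
      map_smul' := by
        rintro c ⟨f, hf⟩
        exact Phi_smul c hf.1 }
  obtain ⟨S', hS'⟩ := Submodule.exists_isCompl S
  refine ⟨T₀.comp (S.linearProjOfIsCompl S' hS'), ?_, ?_⟩
  · intro f hf1 hf2 hf3
    have hfS : f ∈ S := ⟨hf1, hf2, hf3⟩
    have hTf : (T₀.comp (S.linearProjOfIsCompl S' hS')) f = Phi f := by
      show T₀ (S.projectionOnto S' hS' f) = Phi f
      rw [Submodule.linearProjOfIsCompl_apply_left hS' ⟨f, hfS⟩]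
      rfl
    rw [hTf]
    exact ⟨Phi_contDiff hf1, Phi_periodic hf1 hf2,
      Phi_div hf1 (AIt_d_eq_zero hf1 hf3)⟩
  · intro r hr
    refine ⟨2 * d, ENNReal.mul_ne_top (by simp) (ENNReal.natCast_ne_top d), ?_⟩
    intro f hf1 hf2 hf3
    have hfS : f ∈ S := ⟨hf1, hf2, hf3⟩
    have hTf : (T₀.comp (S.linearProjOfIsCompl S' hS')) f = Phi f := by
      show T₀ (S.projectionOnto S' hS' f) = Phi f
      rw [Submodule.linearProjOfIsCompl_apply_left hS' ⟨f, hfS⟩]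
      rfl
    rw [hTf]
    exact Phi_eLpNorm hf1 hr
end
end

section
/- Let d ≥ 1, fix j ∈ {1,…,d}, let φ, φ̃, ψ : ℝ^d → ℝ be smooth with ∂_j ψ ≡ 0 (ψ does not depend on the j-th coordinate), and let λ, ν ∈ ℝ and σ ∈ ℝ, σ ≠ 0. Define for (t,x) ∈ ℝ × ℝ^d: Θ(t,x) := φ(λ(x − σt e_j)) ψ(νx), W(t,x) := φ̃(λ(x − σt e_j)) ψ(νx) e_j, and Q(t,x) := σ^{−1} φ(λ(x − σt e_j)) φ̃(λ(x − σt e_j)) ψ(νx)². Then for all (t,x): ∂_t Q(t,x) + div_x(Θ W)(t,x) = 0, where div_x(ΘW) = Σ_{k=1}^d ∂_{x_k}(Θ W_k). -/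
noncomputable section

/-- The Mikado density `Θ(t,x) = φ(λ(x−σt e_j)) ψ(νx)`, the Mikado field
`W(t,x) = φ̃(λ(x−σt e_j)) ψ(νx) e_j` and the quadratic corrector
`Q(t,x) = σ⁻¹ φ(λ(x−σt e_j)) φ̃(λ(x−σt e_j)) ψ(νx)²` (with `ψ` independent of the `j`-th
coordinate) solve the continuity equation `∂_t Q + div_x(Θ W) = 0`. -/
theorem mikado_continuity_equation (d : ℕ) (hd : 1 ≤ d) (j : Fin d)
    (φ φt ψ : EuclideanSpace ℝ (Fin d) → ℝ)
    (hφ : ContDiff ℝ (⊤ : ℕ∞) φ) (hφt : ContDiff ℝ (⊤ : ℕ∞) φt)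
    (hψ : ContDiff ℝ (⊤ : ℕ∞) ψ)
    (hψj : ∀ x, fderiv ℝ ψ x (EuclideanSpace.single j 1) = 0)
    (lam ν σ : ℝ) (hσ : σ ≠ 0) :
    ∀ (t : ℝ) (x : EuclideanSpace ℝ (Fin d)),
      deriv (fun s : ℝ =>
          σ⁻¹ * (φ (lam • (x - (σ * s) • EuclideanSpace.single j (1:ℝ)))
            * φt (lam • (x - (σ * s) • EuclideanSpace.single j (1:ℝ)))
            * (ψ (ν • x)) ^ 2)) t
      + ∑ i : Fin d,
          fderiv ℝ (fun y : EuclideanSpace ℝ (Fin d) =>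
              (φ (lam • (y - (σ * t) • EuclideanSpace.single j (1:ℝ))) * ψ (ν • y))
              * (φt (lam • (y - (σ * t) • EuclideanSpace.single j (1:ℝ))) * ψ (ν • y)
                  * EuclideanSpace.single j (1:ℝ) i))
            x (EuclideanSpace.single i 1)
      = 0 := by
  intro t x
  set ej : EuclideanSpace ℝ (Fin d) := EuclideanSpace.single j (1:ℝ) with hej
  set z : EuclideanSpace ℝ (Fin d) := lam • (x - (σ * t) • ej) with hz
  have hφz : HasFDerivAt φ (fderiv ℝ φ z) z :=
    ((hφ.differentiable (by simp)) z).hasFDerivAt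
  have hφtz : HasFDerivAt φt (fderiv ℝ φt z) z :=
    ((hφt.differentiable (by simp)) z).hasFDerivAt
  have hψz : HasFDerivAt ψ (fderiv ℝ ψ (ν • x)) (ν • x) :=
    ((hψ.differentiable (by simp)) (ν • x)).hasFDerivAt
  -- time derivative of the path
  have hc : HasDerivAt (fun s : ℝ => lam • (x - (σ * s) • ej)) ((-(lam * σ)) • ej) t := by
    have h1 : HasDerivAt (fun s : ℝ => (σ * s) • ej) (σ • ej) t := by
      simpa using (((hasDerivAt_id t).const_mul σ).smul_const ej)
    have h2 := (h1.const_sub x).const_smul lam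
    exact h2.congr_deriv (by simp [smul_smul, neg_smul])
  have hA : HasDerivAt (fun s : ℝ => φ (lam • (x - (σ * s) • ej)))
      (fderiv ℝ φ z ((-(lam * σ)) • ej)) t := hφz.comp_hasDerivAt t hc
  have hB : HasDerivAt (fun s : ℝ => φt (lam • (x - (σ * s) • ej)))
      (fderiv ℝ φt z ((-(lam * σ)) • ej)) t := hφtz.comp_hasDerivAt t hc
  have htime : HasDerivAt (fun s : ℝ =>
      σ⁻¹ * (φ (lam • (x - (σ * s) • ej)) * φt (lam • (x - (σ * s) • ej))
        * (ψ (ν • x)) ^ 2))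
      (σ⁻¹ * ((fderiv ℝ φ z ((-(lam * σ)) • ej) * φt z
        + φ z * fderiv ℝ φt z ((-(lam * σ)) • ej)) * (ψ (ν • x)) ^ 2)) t :=
    ((hA.mul hB).mul_const _).const_mul σ⁻¹
  -- spatial derivatives
  have hL : HasFDerivAt (fun y : EuclideanSpace ℝ (Fin d) => lam • (y - (σ * t) • ej))
      (lam • ContinuousLinearMap.id ℝ (EuclideanSpace ℝ (Fin d))) x :=
    ((hasFDerivAt_id x).sub_const _).const_smul lam
  have hN : HasFDerivAt (fun y : EuclideanSpace ℝ (Fin d) => ν • y)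
      (ν • ContinuousLinearMap.id ℝ (EuclideanSpace ℝ (Fin d))) x :=
    (hasFDerivAt_id x).const_smul ν
  have hφx : HasFDerivAt (fun y : EuclideanSpace ℝ (Fin d) => φ (lam • (y - (σ * t) • ej)))
      ((fderiv ℝ φ z).comp (lam • ContinuousLinearMap.id ℝ (EuclideanSpace ℝ (Fin d)))) x :=
    hφz.comp x hL
  have hφtx : HasFDerivAt (fun y : EuclideanSpace ℝ (Fin d) => φt (lam • (y - (σ * t) • ej)))
      ((fderiv ℝ φt z).comp (lam • ContinuousLinearMap.id ℝ (EuclideanSpace ℝ (Fin d)))) x :=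
    hφtz.comp x hL
  have hψx : HasFDerivAt (fun y : EuclideanSpace ℝ (Fin d) => ψ (ν • y))
      ((fderiv ℝ ψ (ν • x)).comp (ν • ContinuousLinearMap.id ℝ (EuclideanSpace ℝ (Fin d)))) x :=
    hψz.comp x hN
  have hF := ((hφx.mul hψx).mul (hφtx.mul hψx)).fderiv
  -- the sum reduces to the j-th term
  have hsum : (∑ i : Fin d,
      fderiv ℝ (fun y : EuclideanSpace ℝ (Fin d) =>
          (φ (lam • (y - (σ * t) • ej)) * ψ (ν • y))
          * (φt (lam • (y - (σ * t) • ej)) * ψ (ν • y) * ej i))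
        x (EuclideanSpace.single i 1))
      = fderiv ℝ (fun y : EuclideanSpace ℝ (Fin d) =>
          (φ (lam • (y - (σ * t) • ej)) * ψ (ν • y))
          * (φt (lam • (y - (σ * t) • ej)) * ψ (ν • y)))
        x (EuclideanSpace.single j 1) := by
    rw [Finset.sum_eq_single_of_mem j (Finset.mem_univ j)]
    · have h1 : ej j = 1 := by simp [hej, EuclideanSpace.single_apply]
      simp only [h1, mul_one]
    · intro i _ hi
      have h0 : ej i = 0 := by simp [hej, EuclideanSpace.single_apply, hi]
      simp only [h0, mul_zero]
      simp
  rw [htime.deriv, hsum, (show fderiv ℝ (fun y : EuclideanSpace ℝ (Fin d) =>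
      (φ (lam • (y - (σ * t) • ej)) * ψ (ν • y)) * (φt (lam • (y - (σ * t) • ej)) * ψ (ν • y))) x
      = _ from hF)]
  have hψ0 : fderiv ℝ ψ (ν • x) (ν • EuclideanSpace.single j (1:ℝ)) = 0 := by
    rw [map_smul, hψj]; simp
  simp only [ContinuousLinearMap.add_apply, ContinuousLinearMap.smul_apply,
    ContinuousLinearMap.comp_apply, ContinuousLinearMap.id_apply,
    map_smul, smul_eq_mul, ← hej, hψ0, Pi.mul_apply, hψj, ← hz]
  field_simp
  ring
end
end

section
/- Let n ≥ 1, θ ∈ (0,1], and let χ : ℝ^n → ℝ be smooth, nonnegative, supported in the closed unit ball, with ∫χ = 1; set χ_ε(z) := ε^{−n}χ(z/ε). Let v : ℝ^n → ℝ be bounded and continuous with Hölder seminorm [v]_θ ≤ H, and let ρ : ℝ^n → ℝ be bounded and continuously differentiable with bounded gradient. Then for every ε ∈ (0,1], the commutator satisfies sup_{z∈ℝ^n} | v(z)·(ρ * χ_ε)(z) − ((vρ) * χ_ε)(z) | ≤ ( sup|v|·(2 sup|ρ| + 2 sup|∇ρ|) + H · sup|ρ| ) · ε^θ. -/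
open MeasureTheory

noncomputable section

/-- Commutator estimate: for a mollifier `χ` on `ℝ^n`, a bounded continuous `v` with Hölder
seminorm `[v]_θ ≤ H` and a bounded `C¹` function `ρ` with bounded gradient,
`sup_z |v(z)(ρ * χ_ε)(z) − ((vρ) * χ_ε)(z)| ≤ (sup|v|(2 sup|ρ| + 2 sup|∇ρ|) + H sup|ρ|) ε^θ`
for every `ε ∈ (0,1]`. -/
theorem commutator_estimate (n : ℕ) (hn : 1 ≤ n) (θ : ℝ) (hθ : θ ∈ Set.Ioc (0:ℝ) 1)
    (χ : EuclideanSpace ℝ (Fin n) → ℝ) (hχ : ContDiff ℝ (⊤ : ℕ∞) χ) (hχpos : ∀ z, 0 ≤ χ z)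
    (hχsupp : Function.support χ ⊆ Metric.closedBall 0 1) (hχint : ∫ z, χ z = 1)
    (v ρ : EuclideanSpace ℝ (Fin n) → ℝ) (hv : Continuous v) (hρ : ContDiff ℝ 1 ρ)
    (H Mv Mρ Mρ' : ℝ)
    (hvH : ∀ z₁ z₂, |v z₁ - v z₂| ≤ H * ‖z₁ - z₂‖ ^ θ)
    (hMv : ∀ z, |v z| ≤ Mv) (hMρ : ∀ z, |ρ z| ≤ Mρ) (hMρ' : ∀ z, ‖fderiv ℝ ρ z‖ ≤ Mρ') :
    ∀ ε : ℝ, 0 < ε → ε ≤ 1 → ∀ z : EuclideanSpace ℝ (Fin n),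
      |v z * (∫ y : EuclideanSpace ℝ (Fin n), ρ (z - y) * (ε ^ (-(n : ℝ)) * χ (ε⁻¹ • y)))
          - ∫ y : EuclideanSpace ℝ (Fin n),
              (v (z - y) * ρ (z - y)) * (ε ^ (-(n : ℝ)) * χ (ε⁻¹ • y))|
        ≤ (Mv * (2 * Mρ + 2 * Mρ') + H * Mρ) * ε ^ θ := by
  obtain ⟨hθ0, hθ1⟩ := hθ
  intro ε hε hε1 z
  have hχc : Continuous χ := hχ.continuous
  have hρc : Continuous ρ := hρ.continuous
  set g : EuclideanSpace ℝ (Fin n) → ℝ := fun y => ε ^ (-(n : ℝ)) * χ (ε⁻¹ • y) with hg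
  have hεrpow : (0:ℝ) ≤ ε ^ (-(n : ℝ)) := Real.rpow_nonneg hε.le _
  have hgc : Continuous g := continuous_const.mul (hχc.comp (continuous_const_smul _))
  have hgnn : ∀ y, 0 ≤ g y := fun y => mul_nonneg hεrpow (hχpos _)
  have hgsupp : ∀ y, ε < ‖y‖ → g y = 0 := by
    intro y hy
    have hχ0 : χ (ε⁻¹ • y) = 0 := by
      by_contra h
      have hmem := hχsupp h
      rw [Metric.mem_closedBall, dist_zero_right, norm_smul, norm_inv,
        Real.norm_of_nonneg hε.le] at hmem
      have : ‖y‖ ≤ ε := by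
        calc ‖y‖ = ε * (ε⁻¹ * ‖y‖) := by field_simp
        _ ≤ ε * 1 := by exact mul_le_mul_of_nonneg_left hmem hε.le
        _ = ε := mul_one ε
      linarith
    simp [hg, hχ0]
  have hgK : HasCompactSupport g := by
    apply HasCompactSupport.intro (isCompact_closedBall (0 : EuclideanSpace ℝ (Fin n)) ε)
    intro y hy
    rw [Metric.mem_closedBall, dist_zero_right, not_le] at hy
    exact hgsupp y hy
  -- integrability
  have hρz : Continuous fun y : EuclideanSpace ℝ (Fin n) => ρ (z - y) :=
    hρc.comp (continuous_const.sub continuous_id)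
  have hvz : Continuous fun y : EuclideanSpace ℝ (Fin n) => v (z - y) :=
    hv.comp (continuous_const.sub continuous_id)
  have hint_g : Integrable g := hgc.integrable_of_hasCompactSupport hgK
  have hK1 : HasCompactSupport fun y => ρ (z - y) * g y := by
    apply HasCompactSupport.intro (isCompact_closedBall (0 : EuclideanSpace ℝ (Fin n)) ε)
    intro y hy
    rw [Metric.mem_closedBall, dist_zero_right, not_le] at hy
    rw [hgsupp y hy, mul_zero]
  have hK2 : HasCompactSupport fun y => (v (z - y) * ρ (z - y)) * g y := by
    apply HasCompactSupport.intro (isCompact_closedBall (0 : EuclideanSpace ℝ (Fin n)) ε)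
    intro y hy
    rw [Metric.mem_closedBall, dist_zero_right, not_le] at hy
    rw [hgsupp y hy, mul_zero]
  have h1 : Integrable fun y => ρ (z - y) * g y :=
    (hρz.mul hgc).integrable_of_hasCompactSupport hK1
  have h2 : Integrable fun y => (v (z - y) * ρ (z - y)) * g y :=
    ((hvz.mul hρz).mul hgc).integrable_of_hasCompactSupport hK2
  -- ∫ g = 1
  have hgint : ∫ y, g y = 1 := by
    rw [hg]
    rw [integral_const_mul]
    rw [Measure.integral_comp_inv_smul_of_nonneg volume χ hε.le]
    rw [finrank_euclideanSpace_fin, hχint]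
    rw [smul_eq_mul, mul_one]
    rw [← Real.rpow_natCast ε n, ← Real.rpow_add hε]
    simp
  -- positivity facts
  have hH : 0 ≤ H := by
    have h01 : (EuclideanSpace.single (⟨0, hn⟩ : Fin n) (1:ℝ)) ≠ 0 := by
      intro h
      have := congrArg (fun f : EuclideanSpace ℝ (Fin n) => f ⟨0, hn⟩) h
      simp at this
    have hnorm : (0:ℝ) < ‖(EuclideanSpace.single (⟨0, hn⟩ : Fin n) (1:ℝ)) - 0‖ := by
      rw [sub_zero]; exact norm_pos_iff.mpr h01
    have := hvH (EuclideanSpace.single (⟨0, hn⟩ : Fin n) (1:ℝ)) 0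
    have h2 : (0:ℝ) ≤ H * ‖(EuclideanSpace.single (⟨0, hn⟩ : Fin n) (1:ℝ)) - 0‖ ^ θ :=
      le_trans (abs_nonneg _) this
    have h3 : (0:ℝ) < ‖(EuclideanSpace.single (⟨0, hn⟩ : Fin n) (1:ℝ)) - 0‖ ^ θ :=
      Real.rpow_pos_of_pos hnorm θ
    rw [mul_comm] at h2
    exact nonneg_of_mul_nonneg_right h2 h3
  have hMv0 : 0 ≤ Mv := le_trans (abs_nonneg _) (hMv 0)
  have hMρ0 : 0 ≤ Mρ := le_trans (abs_nonneg _) (hMρ 0)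
  have hMρ'0 : 0 ≤ Mρ' := le_trans (norm_nonneg _) (hMρ' 0)
  have hεθ : 0 ≤ ε ^ θ := Real.rpow_nonneg hε.le θ
  -- main computation
  have hmul : v z * (∫ y, ρ (z - y) * g y) = ∫ y, v z * (ρ (z - y) * g y) :=
    (integral_const_mul _ _).symm
  rw [hmul, ← integral_sub (h1.const_mul (v z)) h2]
  have hbound : ∀ y, |v z * (ρ (z - y) * g y) - v (z - y) * ρ (z - y) * g y|
      ≤ H * Mρ * ε ^ θ * g y := by
    intro y
    rcases le_or_gt ‖y‖ ε with hy | hy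
    · have : v z * (ρ (z - y) * g y) - v (z - y) * ρ (z - y) * g y
          = (v z - v (z - y)) * ρ (z - y) * g y := by ring
      rw [this, abs_mul, abs_mul, abs_of_nonneg (hgnn y)]
      have hvb : |v z - v (z - y)| ≤ H * ε ^ θ := by
        calc |v z - v (z - y)| ≤ H * ‖z - (z - y)‖ ^ θ := hvH _ _
        _ = H * ‖y‖ ^ θ := by rw [sub_sub_cancel]
        _ ≤ H * ε ^ θ := by
            apply mul_le_mul_of_nonneg_left _ hH
            exact Real.rpow_le_rpow (norm_nonneg _) hy hθ0.le
      calc |v z - v (z - y)| * |ρ (z - y)| * g y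
          ≤ (H * ε ^ θ) * Mρ * g y := by
            apply mul_le_mul_of_nonneg_right _ (hgnn y)
            exact mul_le_mul hvb (hMρ _) (abs_nonneg _)
              (mul_nonneg hH hεθ)
        _ = H * Mρ * ε ^ θ * g y := by ring
    · rw [hgsupp y hy]
      simp
  have habs : |∫ y, (v z * (ρ (z - y) * g y) - v (z - y) * ρ (z - y) * g y)|
      ≤ ∫ y, H * Mρ * ε ^ θ * g y := by
    rw [← Real.norm_eq_abs]
    apply norm_integral_le_of_norm_le (hint_g.const_mul _)
    filter_upwards with y
    rw [Real.norm_eq_abs]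
    exact hbound y
  calc |∫ y, (v z * (ρ (z - y) * g y) - v (z - y) * ρ (z - y) * g y)|
      ≤ ∫ y, H * Mρ * ε ^ θ * g y := habs
    _ = H * Mρ * ε ^ θ := by rw [integral_const_mul, hgint, mul_one]
    _ ≤ (Mv * (2 * Mρ + 2 * Mρ') + H * Mρ) * ε ^ θ := by
        apply mul_le_mul_of_nonneg_right _ hεθ
        nlinarith
end
end
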